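/- arXiv:1103.1165 — 7 statements merged into one kernel-verified Lean document; each statement's English description precedes it below -/
import Mathlib

section
/- The function R belongs to the class 𝒢; that is, R is continuous, satisfies F(x) ≤ R(x) ≤ F(x) + Δ for all x ∈ ℝ^d_+, and R is concave on every convex set D ⊆ ℝ^d_+ on which R < F + Δ. -/
open Set
open scoped Classical

noncomputable section

/-- The nonnegative orthant of `ℝ^d` (with the Euclidean structure). -/
def orthant (d : ℕ) : Set (EuclideanSpace ℝ (Fin d)) := {x | ∀ i, 0 ≤ x i}

/-- The subdifferential (set of subgradients) of a function `φ : ℝ₊ → ℝ` at a point `t`. -/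
def subdiff (φ : ℝ → ℝ) (t : ℝ) : Set ℝ :=
  {v | ∀ s : ℝ, 0 ≤ s → φ t + v * (s - t) ≤ φ s}

/-- `Fi F i t = F (t • e_i)`, the restriction of `F` to the `i`-th coordinate axis. -/
def Fi {d : ℕ} (F : EuclideanSpace ℝ (Fin d) → ℝ) (i : Fin d) (t : ℝ) : ℝ :=
  F (t • EuclideanSpace.single i (1 : ℝ))

/-- The set `{t > 0 : (F_i(t) + Δ - F(0))/t ∈ ∂F_i(t)}` defining `A_i`. -/
def setA {d : ℕ} (F : EuclideanSpace ℝ (Fin d) → ℝ) (Δ : ℝ) (i : Fin d) : Set ℝ :=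
  {t | 0 < t ∧ (Fi F i t + Δ - F 0) / t ∈ subdiff (Fi F i) t}

/-- `A_i` (finite value; `A_i = ∞` corresponds to `setA F Δ i` being empty). -/
def Avar {d : ℕ} (F : EuclideanSpace ℝ (Fin d) → ℝ) (Δ : ℝ) (i : Fin d) : ℝ :=
  sInf (setA F Δ i)

/-- `B_i = (F_i(A_i) + Δ - F(0))/A_i` if `A_i < ∞`, and
`B_i = sup ⋃_{t>0} ∂F_i(t)` otherwise. -/
def Bvar {d : ℕ} (F : EuclideanSpace ℝ (Fin d) → ℝ) (Δ : ℝ) (i : Fin d) : ℝ :=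
  if (setA F Δ i).Nonempty then (Fi F i (Avar F Δ i) + Δ - F 0) / Avar F Δ i
  else sSup (⋃ t ∈ Ioi (0 : ℝ), subdiff (Fi F i) t)

/-- The inner product `⟨B, x⟩`. -/
def Bdot {d : ℕ} (F : EuclideanSpace ℝ (Fin d) → ℝ) (Δ : ℝ)
    (x : EuclideanSpace ℝ (Fin d)) : ℝ :=
  ∑ i, Bvar F Δ i * x i

/-- The set `{t > 0 : F(0) + ⟨B, t·x/‖x‖⟩ ≥ Δ + F(t·x/‖x‖)}` defining `H(x)`. -/
def setH {d : ℕ} (F : EuclideanSpace ℝ (Fin d) → ℝ) (Δ : ℝ)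
    (x : EuclideanSpace ℝ (Fin d)) : Set ℝ :=
  {t | 0 < t ∧ Δ + F ((t / ‖x‖) • x) ≤ F 0 + Bdot F Δ ((t / ‖x‖) • x)}

/-- The game analogue `R` of the concave envelope: `R(0) = F(0)`; for `x ≠ 0`,
`R(x) = F(x) + Δ` if `‖x‖ ≥ H(x)` (i.e. `setH F Δ x` is nonempty with `sInf ≤ ‖x‖`),
and `R(x) = F(0) + ⟨B, x⟩` if `‖x‖ < H(x)`. -/
def Rfun {d : ℕ} (F : EuclideanSpace ℝ (Fin d) → ℝ) (Δ : ℝ)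
    (x : EuclideanSpace ℝ (Fin d)) : ℝ :=
  if x = 0 then F 0
  else if (setH F Δ x).Nonempty ∧ sInf (setH F Δ x) ≤ ‖x‖ then F x + Δ
  else F 0 + Bdot F Δ x

/-- Membership in the class `𝒢`: `f : ℝ^d₊ → ℝ₊` continuous, `F ≤ f ≤ F + Δ`, and `f`
is concave on every convex subset `D` of the orthant on which `f < F + Δ`. -/
def memG {d : ℕ} (F : EuclideanSpace ℝ (Fin d) → ℝ) (Δ : ℝ)
    (f : EuclideanSpace ℝ (Fin d) → ℝ) : Prop :=
  ContinuousOn f (orthant d) ∧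
  (∀ x ∈ orthant d, 0 ≤ f x) ∧
  (∀ x ∈ orthant d, F x ≤ f x ∧ f x ≤ F x + Δ) ∧
  (∀ D : Set (EuclideanSpace ℝ (Fin d)), D ⊆ orthant d → Convex ℝ D →
    (∀ x ∈ D, f x < F x + Δ) → ConcaveOn ℝ D f)

namespace RmemGAux

variable {d : ℕ}

/-- the `i`-th standard basis vector -/
def ev (d : ℕ) (i : Fin d) : EuclideanSpace ℝ (Fin d) := EuclideanSpace.single i (1 : ℝ)

/-- the slope function `m_i(t) = (F_i(t) + Δ - F(0))/t`. -/
def mf {d : ℕ} (F : EuclideanSpace ℝ (Fin d) → ℝ) (Δ : ℝ) (i : Fin d) (t : ℝ) : ℝ :=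
  (Fi F i t + Δ - F 0) / t

/-- the linear functional `σ` cutting out the simplex. -/
def sig {d : ℕ} (F : EuclideanSpace ℝ (Fin d) → ℝ) (Δ : ℝ)
    (x : EuclideanSpace ℝ (Fin d)) : ℝ :=
  ∑ i, (if (setA F Δ i).Nonempty then (Avar F Δ i)⁻¹ else 0) * x i

section Basic

variable {F : EuclideanSpace ℝ (Fin d) → ℝ} {Δ : ℝ} {L : NNReal}

lemma ev_mem (i : Fin d) : ev d i ∈ orthant d := by
  intro j
  simp [ev, EuclideanSpace.single_apply]
  split <;> norm_num

lemma zero_mem : (0 : EuclideanSpace ℝ (Fin d)) ∈ orthant d := fun i => le_rfl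

lemma smul_mem {x : EuclideanSpace ℝ (Fin d)} (hx : x ∈ orthant d) {c : ℝ} (hc : 0 ≤ c) :
    c • x ∈ orthant d := by
  intro j
  have := hx j
  have : 0 ≤ c * x j := mul_nonneg hc this
  simpa using this

lemma add_mem {x y : EuclideanSpace ℝ (Fin d)} (hx : x ∈ orthant d) (hy : y ∈ orthant d) :
    x + y ∈ orthant d := by
  intro j
  have := add_nonneg (hx j) (hy j)
  simpa using this

lemma smul_ev_mem (i : Fin d) {t : ℝ} (ht : 0 ≤ t) : t • ev d i ∈ orthant d :=
  smul_mem (ev_mem i) ht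

/-- Lipschitz inequality in convenient real form. -/
lemma lip (hFlip : LipschitzOnWith L F (orthant d)) {a b : EuclideanSpace ℝ (Fin d)}
    (ha : a ∈ orthant d) (hb : b ∈ orthant d) : |F a - F b| ≤ L * ‖a - b‖ := by
  have := hFlip.dist_le_mul a ha b hb
  rwa [Real.dist_eq, dist_eq_norm] at this

lemma Fi_zero (i : Fin d) : Fi F i 0 = F 0 := by simp [Fi]

lemma Fi_convexOn (hFconv : ConvexOn ℝ (orthant d) F) (i : Fin d) :
    ConvexOn ℝ (Ici (0:ℝ)) (Fi F i) := by
  constructor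
  · exact convex_Ici 0
  · intro s hs t ht a b ha hb hab
    have h1 : (a * s + b * t) • EuclideanSpace.single i (1:ℝ)
        = a • (s • EuclideanSpace.single i (1:ℝ)) + b • (t • EuclideanSpace.single i (1:ℝ)) := by
      rw [add_smul]; rw [smul_smul, smul_smul]
    have := hFconv.2 (smul_ev_mem i hs) (smul_ev_mem i ht) ha hb hab
    simpa [Fi, h1, ev] using this

lemma Fi_lip (hFlip : LipschitzOnWith L F (orthant d)) (i : Fin d) {s t : ℝ}
    (hs : 0 ≤ s) (ht : 0 ≤ t) : |Fi F i t - Fi F i s| ≤ L * |t - s| := by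
  have h := lip hFlip (smul_ev_mem i ht) (smul_ev_mem i hs)
  have hn : ‖t • ev d i - s • ev d i‖ = |t - s| := by
    rw [← sub_smul, norm_smul]
    simp [ev, EuclideanSpace.norm_single]
  rw [hn] at h
  exact h

lemma Fi_lipOn (hFlip : LipschitzOnWith L F (orthant d)) (i : Fin d) :
    LipschitzOnWith L (Fi F i) (Ici 0) := by
  apply LipschitzOnWith.of_dist_le_mul
  intro s hs t ht
  rw [Real.dist_eq, Real.dist_eq]
  exact Fi_lip hFlip i ht hs

lemma Fi_continuousOn (hFlip : LipschitzOnWith L F (orthant d)) (i : Fin d) :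
    ContinuousOn (Fi F i) (Ici 0) := (Fi_lipOn hFlip i).continuousOn

lemma exists_subgrad (hFconv : ConvexOn ℝ (orthant d) F)
    (hFlip : LipschitzOnWith L F (orthant d)) (i : Fin d) {t : ℝ} (ht : 0 < t) :
    ∃ v ∈ subdiff (Fi F i) t, |v| ≤ L := by
  set φ := Fi F i with hφ
  set S : Set ℝ := (fun s => (φ s - φ t) / (s - t)) '' Ioi t with hS
  have hmem : ∀ s, t < s → (φ s - φ t) / (s - t) ∈ S := fun s hs => ⟨s, hs, rfl⟩
  have hslope_abs : ∀ s, t < s → |(φ s - φ t) / (s - t)| ≤ (L : ℝ) := by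
    intro s hs
    have h1 : |φ s - φ t| ≤ L * |s - t| := Fi_lip hFlip i ht.le (ht.trans hs).le
    rw [abs_div]
    rw [div_le_iff₀ (by rw [abs_pos]; linarith)]
    exact h1
  have hlbS : ∀ y ∈ S, -(L:ℝ) ≤ y := by
    rintro y ⟨s, hs, rfl⟩
    have := hslope_abs s hs
    have := abs_le.mp this
    linarith [this.1]
  have hSne : S.Nonempty := ⟨_, hmem (t+1) (by linarith)⟩
  have hSbdd : BddBelow S := ⟨-(L:ℝ), hlbS⟩
  set v := sInf S with hv
  have hvle : ∀ s, t < s → v ≤ (φ s - φ t) / (s - t) := fun s hs => csInf_le hSbdd (hmem s hs)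
  have hvub : v ≤ (L:ℝ) := by
    refine le_trans (hvle (t+1) (by linarith)) ?_
    have := (abs_le.mp (hslope_abs (t+1) (by linarith))).2
    linarith
  have hvlb : -(L:ℝ) ≤ v := le_csInf hSne hlbS
  have hconv := Fi_convexOn hFconv i
  refine ⟨v, ?_, abs_le.mpr ⟨hvlb, hvub⟩⟩
  intro s hs
  rcases lt_trichotomy s t with hlt | heq | hgt
  · -- s < t : left slope ≤ all right slopes, hence ≤ v
    have hlb : ∀ y ∈ S, (φ t - φ s) / (t - s) ≤ y := by
      rintro y ⟨r, hr, rfl⟩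
      exact hconv.slope_mono_adjacent hs (le_trans ht.le (le_of_lt hr)) hlt hr
    have h2 : (φ t - φ s) / (t - s) ≤ v := le_csInf hSne hlb
    have h3 : φ t - φ s ≤ v * (t - s) := by
      rw [div_le_iff₀ (by linarith)] at h2
      linarith
    nlinarith
  · subst heq; simp
  · have h2 := hvle s hgt
    rw [le_div_iff₀ (by linarith)] at h2
    linarith

end Basic

section SetA

variable {F : EuclideanSpace ℝ (Fin d) → ℝ} {Δ : ℝ} {L : NNReal} {i : Fin d}

lemma mf_mul {t : ℝ} (ht : t ≠ 0) : mf F Δ i t * t = Fi F i t + Δ - F 0 :=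
  div_mul_cancel₀ _ ht

lemma mem_setA_iff (hΔ : 0 < Δ) {t : ℝ} :
    t ∈ setA F Δ i ↔ 0 < t ∧ ∀ s, 0 < s → mf F Δ i t ≤ mf F Δ i s := by
  constructor
  · rintro ⟨ht, hsub⟩
    refine ⟨ht, fun s hs => ?_⟩
    have h := hsub s hs.le
    have hct : mf F Δ i t * t = Fi F i t + Δ - F 0 := mf_mul ht.ne'
    rw [show (Fi F i t + Δ - F 0) / t = mf F Δ i t from rfl] at h
    rw [show mf F Δ i s = (Fi F i s + Δ - F 0) / s from rfl, le_div_iff₀ hs]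
    nlinarith
  · rintro ⟨ht, hmin⟩
    refine ⟨ht, fun s hs0 => ?_⟩
    rcases eq_or_lt_of_le hs0 with hs | hs
    · have : (0:ℝ) = s := hs
      subst this
      have hct : (Fi F i t + Δ - F 0) / t * t = Fi F i t + Δ - F 0 := mf_mul ht.ne'
      rw [Fi_zero]
      nlinarith [hΔ]
    · have h := hmin s hs
      have hct : mf F Δ i t * t = Fi F i t + Δ - F 0 := mf_mul ht.ne'
      have hcs : mf F Δ i s * s = Fi F i s + Δ - F 0 := mf_mul hs.ne'
      have h2 : mf F Δ i t * s ≤ mf F Δ i s * s := by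
        apply mul_le_mul_of_nonneg_right h hs.le
      rw [show (Fi F i t + Δ - F 0) / t = mf F Δ i t from rfl]
      nlinarith
lemma mf_lb (hFlip : LipschitzOnWith L F (orthant d)) {t : ℝ} (ht : 0 < t) :
    Δ / t - L ≤ mf F Δ i t := by
  have h := Fi_lip (L := L) hFlip i le_rfl ht.le
  rw [Fi_zero] at h
  have h1 : F 0 - L * t ≤ Fi F i t := by
    have h2 := (abs_le.mp h).1
    rw [show t - 0 = t by ring, abs_of_pos ht] at h2
    linarith
  rw [mf, le_div_iff₀ ht]
  have h3 : Δ / t * t = Δ := div_mul_cancel₀ _ ht.ne'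
  nlinarith

lemma mf_add_L_pos (hΔ : 0 < Δ) (hFlip : LipschitzOnWith L F (orthant d)) {t : ℝ} (ht : 0 < t) :
    0 < mf F Δ i t + L := by
  have := mf_lb (Δ := Δ) (i := i) hFlip ht
  have hΔt : 0 < Δ / t := div_pos hΔ ht
  linarith

lemma A_mem (hΔ : 0 < Δ) (hFlip : LipschitzOnWith L F (orthant d))
    (hne : (setA F Δ i).Nonempty) :
    0 < Avar F Δ i ∧ Avar F Δ i ∈ setA F Δ i := by
  obtain ⟨t0, ht0⟩ := hne
  have ht0' := (mem_setA_iff hΔ).mp ht0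
  have ht0pos : 0 < t0 := ht0'.1
  have hCpos : 0 < mf F Δ i t0 + (L:ℝ) := mf_add_L_pos hΔ hFlip ht0pos
  have hlb : ∀ t ∈ setA F Δ i, Δ / (mf F Δ i t0 + (L:ℝ)) ≤ t := by
    intro t htA
    have ht' := (mem_setA_iff hΔ).mp htA
    have htpos := ht'.1
    have h1 : mf F Δ i t ≤ mf F Δ i t0 := ht'.2 t0 ht0pos
    have h2 : Δ / t - (L:ℝ) ≤ mf F Δ i t := mf_lb hFlip htpos
    have h3 : Δ / t ≤ mf F Δ i t0 + (L:ℝ) := by linarith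
    rw [div_le_iff₀ htpos] at h3
    rw [div_le_iff₀ hCpos]
    nlinarith
  have hbdd : BddBelow (setA F Δ i) := ⟨_, hlb⟩
  have hApos : 0 < Avar F Δ i :=
    lt_of_lt_of_le (div_pos hΔ hCpos) (le_csInf ⟨t0, ht0⟩ hlb)
  have hAle : Avar F Δ i ≤ t0 := csInf_le hbdd ht0
  have hge : mf F Δ i t0 ≤ mf F Δ i (Avar F Δ i) := ht0'.2 _ hApos
  have hle : mf F Δ i (Avar F Δ i) ≤ mf F Δ i t0 := by
    by_contra hlt
    push_neg at hlt
    have hcont : ContinuousAt (mf F Δ i) (Avar F Δ i) := by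
      have h1 : ContinuousAt (Fi F i) (Avar F Δ i) :=
        (Fi_continuousOn hFlip i).continuousAt (Ici_mem_nhds hApos)
      exact ContinuousAt.div ((h1.add continuousAt_const).sub continuousAt_const)
        continuousAt_id hApos.ne'
    rw [Metric.continuousAt_iff] at hcont
    obtain ⟨δ, hδ, hball⟩ := hcont (mf F Δ i (Avar F Δ i) - mf F Δ i t0) (by linarith)
    have hstep : ∀ t ∈ setA F Δ i, Avar F Δ i + δ ≤ t := by
      intro t htA
      have ht' := (mem_setA_iff hΔ).mp htA
      have h1 : mf F Δ i t = mf F Δ i t0 :=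
        le_antisymm (ht'.2 t0 ht0pos) (ht0'.2 t ht'.1)
      by_contra hc
      push_neg at hc
      have hge' : Avar F Δ i ≤ t := csInf_le hbdd htA
      have hd : dist t (Avar F Δ i) < δ := by
        rw [Real.dist_eq, abs_of_nonneg (by linarith)]; linarith
      have := hball hd
      rw [Real.dist_eq, h1, abs_of_nonpos (by linarith)] at this
      linarith
    have := le_csInf ⟨t0, ht0⟩ hstep
    have : Avar F Δ i + δ ≤ Avar F Δ i := this
    linarith
  refine ⟨hApos, (mem_setA_iff hΔ).mpr ⟨hApos, fun s hs => ?_⟩⟩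
  exact le_trans hle (ht0'.2 s hs)

lemma B_eq_fin (hne : (setA F Δ i).Nonempty) :
    Bvar F Δ i = mf F Δ i (Avar F Δ i) := by
  rw [Bvar, if_pos hne]; rfl

lemma FiA (hΔ : 0 < Δ) (hFlip : LipschitzOnWith L F (orthant d))
    (hne : (setA F Δ i).Nonempty) :
    Fi F i (Avar F Δ i) = F 0 + Bvar F Δ i * Avar F Δ i - Δ := by
  obtain ⟨hA, _⟩ := A_mem hΔ hFlip hne
  have := mf_mul (F := F) (Δ := Δ) (i := i) hA.ne'
  rw [B_eq_fin hne]
  linarith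

lemma bddAbove_U (hFlip : LipschitzOnWith L F (orthant d)) :
    BddAbove (⋃ t ∈ Ioi (0:ℝ), subdiff (Fi F i) t) := by
  refine ⟨L, ?_⟩
  rintro v hv
  simp only [mem_iUnion] at hv
  obtain ⟨s, hs, hvs⟩ := hv
  rw [mem_Ioi] at hs
  have h := hvs (s + 1) (by linarith)
  have h2 := Fi_lip (L := L) hFlip i hs.le (by linarith : (0:ℝ) ≤ s + 1)
  have h3 := (abs_le.mp h2).2
  rw [show s + 1 - s = (1:ℝ) by ring, abs_one] at h3
  nlinarith

lemma K1 (hΔ : 0 < Δ) (hFconv : ConvexOn ℝ (orthant d) F)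
    (hFlip : LipschitzOnWith L F (orthant d)) {t : ℝ} (ht : 0 < t) :
    Bvar F Δ i ≤ mf F Δ i t := by
  by_cases hne : (setA F Δ i).Nonempty
  · rw [B_eq_fin hne]
    exact ((mem_setA_iff hΔ).mp (A_mem hΔ hFlip hne).2).2 t ht
  · rw [Bvar, if_neg hne]
    obtain ⟨v1, hv1, _⟩ := exists_subgrad hFconv hFlip i one_pos
    have hUne : (⋃ s ∈ Ioi (0:ℝ), subdiff (Fi F i) s).Nonempty :=
      ⟨v1, mem_biUnion (mem_Ioi.mpr one_pos) hv1⟩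
    apply csSup_le hUne
    rintro v hv
    simp only [mem_iUnion] at hv
    obtain ⟨s, hs', hvs⟩ := hv
    rw [mem_Ioi] at hs'
    by_contra hvt
    push_neg at hvt
    have hts : mf F Δ i t * t = Fi F i t + Δ - F 0 := mf_mul ht.ne'
    have hss : mf F Δ i s * s = Fi F i s + Δ - F 0 := mf_mul hs'.ne'
    rcases le_or_gt v (mf F Δ i s) with hms | hms
    · have h := hvs t ht.le
      have h2 : v * s ≤ Fi F i s + Δ - F 0 := by
        nlinarith [mul_le_mul_of_nonneg_right hms hs'.le]
      have h3 : v * t ≤ Fi F i t + Δ - F 0 := by nlinarith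
      have h4 : v ≤ mf F Δ i t := by
        rw [show mf F Δ i t = (Fi F i t + Δ - F 0) / t from rfl, le_div_iff₀ ht]
        linarith
      linarith
    · -- mf s < v : minimize mf on a compact interval and contradict setA = ∅
      have hCt : 0 < mf F Δ i t + (L:ℝ) := mf_add_L_pos hΔ hFlip ht
      set a := (1/2) * min t (Δ / (mf F Δ i t + (L:ℝ))) with ha
      have hminpos : 0 < min t (Δ / (mf F Δ i t + (L:ℝ))) := lt_min ht (div_pos hΔ hCt)
      have hapos : 0 < a := by rw [ha]; linarith
      have hat : a ≤ t := by
        have := min_le_left t (Δ / (mf F Δ i t + (L:ℝ)))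
        rw [ha]; linarith
      have hlow : ∀ r, 0 < r → r ≤ a → mf F Δ i t < mf F Δ i r := by
        intro r hr hra
        have h1 : Δ / r - (L:ℝ) ≤ mf F Δ i r := mf_lb hFlip hr
        have h2 : Δ / a ≤ Δ / r := by
          apply div_le_div_of_nonneg_left hΔ.le hr hra
        have h3 : mf F Δ i t + (L:ℝ) < Δ / a := by
          have hmin2 : a < Δ / (mf F Δ i t + (L:ℝ)) := by
            have := min_le_right t (Δ / (mf F Δ i t + (L:ℝ)))
            rw [ha]; linarith
          rw [lt_div_iff₀ hapos]
          rw [lt_div_iff₀ hCt] at hmin2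
          nlinarith
        linarith
      have hvt' : 0 < v - mf F Δ i t := by linarith
      set b := max (max t s) (s * (v - mf F Δ i s) / (v - mf F Δ i t)) + 1 with hb
      have hbt : t ≤ b := by
        have h1 := le_max_left t s
        have h2 := le_max_left (max t s) (s * (v - mf F Δ i s) / (v - mf F Δ i t))
        rw [hb]; linarith
      have hbs : s ≤ b := by
        have h1 := le_max_right t s
        have h2 := le_max_left (max t s) (s * (v - mf F Δ i s) / (v - mf F Δ i t))
        rw [hb]; linarith
      have hbig : s * (v - mf F Δ i s) / (v - mf F Δ i t) < b := by
        have h2 := le_max_right (max t s) (s * (v - mf F Δ i s) / (v - mf F Δ i t))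
        rw [hb]; linarith
      have hhigh : ∀ r, b ≤ r → mf F Δ i t < mf F Δ i r := by
        intro r hbr
        have hrpos : 0 < r := lt_of_lt_of_le (lt_of_lt_of_le ht hbt) hbr
        have h := hvs r hrpos.le
        have hrr : mf F Δ i r * r = Fi F i r + Δ - F 0 := mf_mul hrpos.ne'
        have h4 : s * (v - mf F Δ i s) / (v - mf F Δ i t) < r := lt_of_lt_of_le hbig hbr
        rw [div_lt_iff₀ hvt'] at h4
        nlinarith
      have hcont : ContinuousOn (mf F Δ i) (Icc a b) := by
        apply ContinuousOn.div
        · apply ContinuousOn.sub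
          · apply ContinuousOn.add
            · apply (Fi_continuousOn hFlip i).mono
              intro r hr
              exact le_trans hapos.le hr.1
            · exact continuousOn_const
          · exact continuousOn_const
        · exact continuousOn_id
        · intro r hr
          exact (lt_of_lt_of_le hapos hr.1).ne'
      obtain ⟨c, hcmem, hcmin⟩ := isCompact_Icc.exists_isMinOn
        ⟨t, mem_Icc.mpr ⟨hat, hbt⟩⟩ hcont
      have hcmin' := isMinOn_iff.mp hcmin
      have hcpos : 0 < c := lt_of_lt_of_le hapos (mem_Icc.mp hcmem).1
      have hct : mf F Δ i c ≤ mf F Δ i t := hcmin' t (mem_Icc.mpr ⟨hat, hbt⟩)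
      have : c ∈ setA F Δ i := by
        rw [mem_setA_iff hΔ]
        refine ⟨hcpos, fun r hr => ?_⟩
        rcases le_or_gt r a with hra | hra
        · exact le_trans hct (le_of_lt (hlow r hr hra))
        · rcases le_or_gt r b with hrb | hrb
          · exact hcmin' r (mem_Icc.mpr ⟨hra.le, hrb⟩)
          · exact le_trans hct (le_of_lt (hhigh r hrb.le))
      exact hne ⟨c, this⟩

lemma chord_fin (hΔ : 0 < Δ) (hFconv : ConvexOn ℝ (orthant d) F)
    (hFlip : LipschitzOnWith L F (orthant d)) (hne : (setA F Δ i).Nonempty)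
    {t : ℝ} (ht : 0 ≤ t) (htA : t ≤ Avar F Δ i) :
    Fi F i t ≤ F 0 + Bvar F Δ i * t := by
  obtain ⟨hApos, hAmem⟩ := A_mem hΔ hFlip hne
  have hFiA : Fi F i (Avar F Δ i) = F 0 + Bvar F Δ i * Avar F Δ i - Δ := FiA hΔ hFlip hne
  have hconv := Fi_convexOn hFconv i
  have hθ0 : 0 ≤ t / Avar F Δ i := div_nonneg ht hApos.le
  have hθ1 : t / Avar F Δ i ≤ 1 := (div_le_one hApos).mpr htA
  have hcomb := hconv.2 (self_mem_Ici) (mem_Ici.mpr hApos.le)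
    (by linarith : (0:ℝ) ≤ 1 - t / Avar F Δ i) hθ0 (by ring)
  rw [smul_zero, zero_add, smul_eq_mul, div_mul_cancel₀ _ hApos.ne'] at hcomb
  rw [Fi_zero, hFiA] at hcomb
  simp only [smul_eq_mul] at hcomb
  have hBA : t / Avar F Δ i * (F 0 + Bvar F Δ i * Avar F Δ i - Δ)
      = t / Avar F Δ i * F 0 + Bvar F Δ i * t - t / Avar F Δ i * Δ := by
    field_simp
  nlinarith [mul_nonneg hθ0 hΔ.le]

lemma chord_inf (hΔ : 0 < Δ) (hFconv : ConvexOn ℝ (orthant d) F)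
    (hFlip : LipschitzOnWith L F (orthant d)) (hemp : ¬(setA F Δ i).Nonempty)
    {t : ℝ} (ht : 0 ≤ t) :
    Fi F i t ≤ F 0 + Bvar F Δ i * t := by
  rcases eq_or_lt_of_le ht with h0 | htpos
  · rw [← h0, Fi_zero]; simp
  · obtain ⟨v, hv, _⟩ := exists_subgrad hFconv hFlip i htpos
    have h := hv 0 le_rfl
    rw [Fi_zero] at h
    have hvB : v ≤ Bvar F Δ i := by
      rw [Bvar, if_neg hemp]
      exact le_csSup (bddAbove_U hFlip) (mem_biUnion (mem_Ioi.mpr htpos) hv)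
    nlinarith

end SetA

section Multi

variable {F : EuclideanSpace ℝ (Fin d) → ℝ} {Δ : ℝ} {L : NNReal}

lemma Fi_eq_ev (i : Fin d) (t : ℝ) : Fi F i t = F (t • ev d i) := rfl

lemma translate_inf (hΔ : 0 < Δ) (hFconv : ConvexOn ℝ (orthant d) F)
    (hFlip : LipschitzOnWith L F (orthant d)) {j : Fin d}
    (hemp : ¬(setA F Δ j).Nonempty) {z : EuclideanSpace ℝ (Fin d)} {s : ℝ}
    (hz : z ∈ orthant d) (hs : 0 ≤ s) :
    F (z + s • ev d j) ≤ F z + Bvar F Δ j * s := by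
  rcases eq_or_lt_of_le hs with h0 | hspos
  · rw [← h0]; simp
  apply le_of_forall_pos_le_add
  intro ε hε
  set M := 2 * (L:ℝ) * ‖z‖ with hM
  have hM0 : 0 ≤ M := by positivity
  set r := max s (s * (M + 1) / ε) with hr
  have hrs : s ≤ r := le_max_left _ _
  have hrpos : 0 < r := lt_of_lt_of_le hspos hrs
  have hrge : s * (M + 1) / ε ≤ r := le_max_right _ _
  set c := s / r with hc
  have hc0 : 0 ≤ c := div_nonneg hs hrpos.le
  have hc1 : c ≤ 1 := (div_le_one hrpos).mpr hrs
  have hcr : c * r = s := div_mul_cancel₀ _ hrpos.ne'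
  have hzre : z + r • ev d j ∈ orthant d := add_mem hz (smul_ev_mem j hrpos.le)
  have hcomb : (1 - c) • z + c • (z + r • ev d j) = z + s • ev d j := by
    rw [smul_add, sub_smul, one_smul, smul_smul, hcr]
    abel
  have key := hFconv.2 hz hzre (by linarith : (0:ℝ) ≤ 1 - c) hc0 (by ring)
  rw [hcomb] at key
  have hlip1 : F (z + r • ev d j) ≤ Fi F j r + (L:ℝ) * ‖z‖ := by
    have h := lip hFlip hzre (smul_ev_mem j hrpos.le)
    rw [show z + r • ev d j - r • ev d j = z by abel] at h
    have := (abs_le.mp h).2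
    rw [Fi_eq_ev]
    linarith
  have hchord : Fi F j r ≤ F 0 + Bvar F Δ j * r := chord_inf hΔ hFconv hFlip hemp hrpos.le
  have hFz : F 0 ≤ F z + (L:ℝ) * ‖z‖ := by
    have h := lip hFlip zero_mem hz
    rw [show (0:EuclideanSpace ℝ (Fin d)) - z = -z by abel, norm_neg] at h
    have := (abs_le.mp h).2
    linarith
  have hcM : c * M ≤ ε := by
    have h5 : s * (M + 1) ≤ r * ε := by
      rw [div_le_iff₀ hε] at hrge
      linarith
    nlinarith
  have hfinal : F (z + s • ev d j) ≤ (1 - c) * F z + c * (F z + Bvar F Δ j * r + M) := by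
    simp only [smul_eq_mul] at key
    nlinarith [hc0]
  have hexp : (1 - c) * F z + c * (F z + Bvar F Δ j * r + M)
      = F z + Bvar F Δ j * (c * r) + c * M := by ring
  rw [hexp, hcr] at hfinal
  linarith

lemma sum_smul_ev_mem (S : Finset (Fin d)) {c : Fin d → ℝ} (hc : ∀ j, 0 ≤ c j) :
    (∑ j ∈ S, c j • ev d j) ∈ orthant d := by
  intro k
  rw [WithLp.ofLp_sum, Finset.sum_apply]
  apply Finset.sum_nonneg
  intro j _
  have h1 : (c j • ev d j) k = c j * ev d j k := rfl
  rw [h1]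
  exact mul_nonneg (hc j) (ev_mem j k)

lemma translate_inf_sum (hΔ : 0 < Δ) (hFconv : ConvexOn ℝ (orthant d) F)
    (hFlip : LipschitzOnWith L F (orthant d)) (S : Finset (Fin d))
    (hS : ∀ j ∈ S, ¬(setA F Δ j).Nonempty) {z : EuclideanSpace ℝ (Fin d)}
    (hz : z ∈ orthant d) {c : Fin d → ℝ} (hc : ∀ j, 0 ≤ c j) :
    F (z + ∑ j ∈ S, c j • ev d j) ≤ F z + ∑ j ∈ S, Bvar F Δ j * c j := by
  classical
  induction S using Finset.induction_on with
  | empty => simp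
  | @insert j S hj ih =>
    rw [Finset.sum_insert hj, Finset.sum_insert hj]
    have hz' : z + ∑ k ∈ S, c k • ev d k ∈ orthant d :=
      add_mem hz (sum_smul_ev_mem S hc)
    have h1 : F ((z + ∑ k ∈ S, c k • ev d k) + c j • ev d j)
        ≤ F (z + ∑ k ∈ S, c k • ev d k) + Bvar F Δ j * c j :=
      translate_inf hΔ hFconv hFlip (hS j (Finset.mem_insert_self j S)) hz' (hc j)
    have h2 := ih (fun k hk => hS k (Finset.mem_insert_of_mem hk))
    have h3 : z + (c j • ev d j + ∑ k ∈ S, c k • ev d k)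
        = (z + ∑ k ∈ S, c k • ev d k) + c j • ev d j := by abel
    rw [h3]
    linarith

lemma sig_eq_filter (x : EuclideanSpace ℝ (Fin d)) :
    sig F Δ x = ∑ i ∈ Finset.univ.filter (fun i => (setA F Δ i).Nonempty),
      (Avar F Δ i)⁻¹ * x i := by
  rw [Finset.sum_filter, sig]
  congr 1
  ext i
  split <;> simp

lemma M_main (hΔ : 0 < Δ) (hFconv : ConvexOn ℝ (orthant d) F)
    (hFlip : LipschitzOnWith L F (orthant d)) {x : EuclideanSpace ℝ (Fin d)}
    (hx : x ∈ orthant d) (hσ : sig F Δ x ≤ 1) :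
    F x ≤ F 0 + Bdot F Δ x - sig F Δ x * Δ := by
  classical
  set Sfin := Finset.univ.filter (fun i => (setA F Δ i).Nonempty) with hSfin
  set Sinf := Finset.univ.filter (fun i => ¬(setA F Δ i).Nonempty) with hSinf
  set w := ∑ i ∈ Sfin, x i • ev d i with hw
  have hxw : x = w + ∑ j ∈ Sinf, x j • ev d j := by
    rw [hw, hSfin, hSinf, Finset.sum_filter_add_sum_filter_not]
    ext j
    rw [WithLp.ofLp_sum, Finset.sum_apply]
    simp [ev, EuclideanSpace.single_apply]
  have hwmem : w ∈ orthant d := sum_smul_ev_mem _ hx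
  -- Step 1 : translate the infinite coordinates
  have step1 : F x ≤ F w + ∑ j ∈ Sinf, Bvar F Δ j * x j := by
    conv_lhs => rw [hxw]
    exact translate_inf_sum hΔ hFconv hFlip Sinf
      (fun j hj => (Finset.mem_filter.mp hj).2) hwmem hx
  -- Step 2 : Jensen on the finite coordinates
  have step2 : F w ≤ F 0 + (∑ i ∈ Sfin, Bvar F Δ i * x i) - sig F Δ x * Δ := by
    set ω : Option (Fin d) → ℝ := fun o => match o with
      | none => 1 - sig F Δ x
      | some i => (if (setA F Δ i).Nonempty then (Avar F Δ i)⁻¹ else 0) * x i with hω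
    set q : Option (Fin d) → EuclideanSpace ℝ (Fin d) := fun o => match o with
      | none => 0
      | some i => Avar F Δ i • ev d i with hq
    have hω0 : ∀ o ∈ (Finset.univ : Finset (Option (Fin d))), 0 ≤ ω o := by
      rintro (_ | i) _
      · simpa [hω] using hσ
      · show 0 ≤ (if (setA F Δ i).Nonempty then (Avar F Δ i)⁻¹ else 0) * x i
        apply mul_nonneg _ (hx i)
        split
        · next hne => exact (inv_nonneg).mpr (A_mem hΔ hFlip hne).1.le
        · exact le_rfl
    have hω1 : ∑ o ∈ (Finset.univ : Finset (Option (Fin d))), ω o = 1 := by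
      rw [Fintype.sum_option]
      have h2 : ∑ i : Fin d, ω (some i) = sig F Δ x := rfl
      rw [h2]
      show 1 - sig F Δ x + sig F Δ x = 1
      ring
    have hqmem : ∀ o ∈ (Finset.univ : Finset (Option (Fin d))), q o ∈ orthant d := by
      rintro (_ | i) _
      · exact zero_mem
      · show Avar F Δ i • ev d i ∈ orthant d
        by_cases hne : (setA F Δ i).Nonempty
        · exact smul_ev_mem i (A_mem hΔ hFlip hne).1.le
        · have hA0 : Avar F Δ i = 0 := by
            rw [Avar, Set.not_nonempty_iff_eq_empty.mp hne, Real.sInf_empty]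
          rw [hA0, zero_smul]
          exact zero_mem
    have hjen := hFconv.map_sum_le hω0 hω1 hqmem
    have hsum_eq : ∑ o ∈ (Finset.univ : Finset (Option (Fin d))), ω o • q o = w := by
      rw [Fintype.sum_option]
      have hnone : ω none • q none = 0 := smul_zero _
      rw [hnone, zero_add, hw, hSfin, Finset.sum_filter]
      apply Finset.sum_congr rfl
      intro i _
      show ((if (setA F Δ i).Nonempty then (Avar F Δ i)⁻¹ else 0) * x i) • (Avar F Δ i • ev d i)
        = if (setA F Δ i).Nonempty then x i • ev d i else 0
      by_cases hne : (setA F Δ i).Nonempty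
      · rw [if_pos hne, if_pos hne, smul_smul]
        have hA := (A_mem hΔ hFlip hne).1
        congr 1
        field_simp
      · rw [if_neg hne, if_neg hne, zero_mul, zero_smul]
    rw [hsum_eq] at hjen
    have hrhs : ∑ o ∈ (Finset.univ : Finset (Option (Fin d))), ω o * F (q o)
        = (1 - sig F Δ x) * F 0
          + ∑ i, (if (setA F Δ i).Nonempty then (Avar F Δ i)⁻¹ * x i else 0)
              * ((F 0 - Δ) + Bvar F Δ i * Avar F Δ i) := by
      rw [Fintype.sum_option]
      congr 1
      apply Finset.sum_congr rfl
      intro i _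
      show ((if (setA F Δ i).Nonempty then (Avar F Δ i)⁻¹ else 0) * x i)
          * F (Avar F Δ i • ev d i) = _
      by_cases hne : (setA F Δ i).Nonempty
      · rw [if_pos hne, if_pos hne]
        have hFiA : F (Avar F Δ i • ev d i) = F 0 + Bvar F Δ i * Avar F Δ i - Δ := by
          have h := FiA (i := i) hΔ hFlip hne
          rw [Fi_eq_ev] at h
          exact h
        rw [hFiA]
        ring
      · rw [if_neg hne, if_neg hne]
        ring
    simp only [smul_eq_mul] at hjen
    rw [hrhs] at hjen
    have hsplit : ∑ i, (if (setA F Δ i).Nonempty then (Avar F Δ i)⁻¹ * x i else 0)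
          * ((F 0 - Δ) + Bvar F Δ i * Avar F Δ i)
        = sig F Δ x * (F 0 - Δ) + ∑ i ∈ Sfin, Bvar F Δ i * x i := by
      have h1 : ∀ i, (if (setA F Δ i).Nonempty then (Avar F Δ i)⁻¹ * x i else 0)
            * ((F 0 - Δ) + Bvar F Δ i * Avar F Δ i)
          = (if (setA F Δ i).Nonempty then (Avar F Δ i)⁻¹ * x i else 0) * (F 0 - Δ)
            + (if (setA F Δ i).Nonempty then Bvar F Δ i * x i else 0) := by
        intro i
        by_cases hne : (setA F Δ i).Nonempty
        · simp only [if_pos hne]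
          have hA := (A_mem hΔ hFlip hne).1
          field_simp
        · simp only [if_neg hne]
          ring
      rw [Finset.sum_congr rfl (fun i _ => h1 i), Finset.sum_add_distrib]
      congr 1
      · rw [← Finset.sum_mul]
        congr 1
        rw [sig]
        apply Finset.sum_congr rfl
        intro i _
        by_cases hne : (setA F Δ i).Nonempty
        · rw [if_pos hne, if_pos hne]
        · rw [if_neg hne, if_neg hne, zero_mul]
      · rw [hSfin, Finset.sum_filter]
    rw [hsplit] at hjen
    have : (1 - sig F Δ x) * F 0 + (sig F Δ x * (F 0 - Δ) + ∑ i ∈ Sfin, Bvar F Δ i * x i)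
        = F 0 + (∑ i ∈ Sfin, Bvar F Δ i * x i) - sig F Δ x * Δ := by ring
    linarith
  have hBsplit : Bdot F Δ x = (∑ i ∈ Sfin, Bvar F Δ i * x i)
      + ∑ j ∈ Sinf, Bvar F Δ j * x j := by
    rw [Bdot, hSfin, hSinf, Finset.sum_filter_add_sum_filter_not]
  linarith

lemma Bdot_smul (c : ℝ) (x : EuclideanSpace ℝ (Fin d)) :
    Bdot F Δ (c • x) = c * Bdot F Δ x := by
  rw [Bdot, Bdot, Finset.mul_sum]
  apply Finset.sum_congr rfl
  intro i _
  have : (c • x) i = c * x i := rfl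
  rw [this]
  ring

lemma sig_smul (c : ℝ) (x : EuclideanSpace ℝ (Fin d)) :
    sig F Δ (c • x) = c * sig F Δ x := by
  rw [sig, sig, Finset.mul_sum]
  apply Finset.sum_congr rfl
  intro i _
  have : (c • x) i = c * x i := rfl
  rw [this]
  ring

lemma sig_nonneg (hΔ : 0 < Δ) (hFlip : LipschitzOnWith L F (orthant d))
    {x : EuclideanSpace ℝ (Fin d)} (hx : x ∈ orthant d) : 0 ≤ sig F Δ x := by
  apply Finset.sum_nonneg
  intro i _
  apply mul_nonneg _ (hx i)
  split
  · next hne => exact (inv_nonneg).mpr (A_mem hΔ hFlip hne).1.le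
  · exact le_rfl

lemma sig_zero : sig F Δ (0 : EuclideanSpace ℝ (Fin d)) = 0 := by
  rw [sig]
  apply Finset.sum_eq_zero
  intro i _
  have : (0 : EuclideanSpace ℝ (Fin d)) i = 0 := rfl
  rw [this, mul_zero]

lemma concaveOn_ray (hFconv : ConvexOn ℝ (orthant d) F)
    {u : EuclideanSpace ℝ (Fin d)} (hu : u ∈ orthant d) :
    ConcaveOn ℝ (Ici (0:ℝ)) (fun t => F 0 + t * Bdot F Δ u - F (t • u)) := by
  refine ⟨convex_Ici 0, ?_⟩
  intro s hs t ht a b ha hb hab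
  rw [mem_Ici] at hs ht
  have hmem1 : s • u ∈ orthant d := smul_mem hu hs
  have hmem2 : t • u ∈ orthant d := smul_mem hu ht
  have hc := hFconv.2 hmem1 hmem2 ha hb hab
  have heq : (a • s + b • t) • u = a • (s • u) + b • (t • u) := by
    rw [smul_smul, smul_smul, ← add_smul]
    congr 1
  show a • (F 0 + s * Bdot F Δ u - F (s • u)) + b • (F 0 + t * Bdot F Δ u - F (t • u))
      ≤ F 0 + (a • s + b • t) * Bdot F Δ u - F ((a • s + b • t) • u)
  rw [heq]
  simp only [smul_eq_mul] at hc ⊢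
  have h4 : a * F 0 + b * F 0 = F 0 := by rw [← add_mul, hab, one_mul]
  have expand : a * (F 0 + s * Bdot F Δ u - F (s • u)) + b * (F 0 + t * Bdot F Δ u - F (t • u))
      = (a * F 0 + b * F 0) + (a * s + b * t) * Bdot F Δ u
        - (a * F (s • u) + b * F (t • u)) := by ring
  linarith

lemma mono_of_concave_nonneg {g : ℝ → ℝ} (hg : ConcaveOn ℝ (Ici (0:ℝ)) g)
    (h0 : ∀ t, 0 ≤ t → 0 ≤ g t) {s t : ℝ} (hs : 0 ≤ s) (hst : s ≤ t) :
    g s ≤ g t := by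
  rcases eq_or_lt_of_le hst with h | hlt
  · rw [h]
  by_contra hc
  push_neg at hc
  have hgs0 : 0 ≤ g s := h0 s hs
  have hgt0 : 0 ≤ g t := h0 t (hs.trans hst)
  set r := max (t + 1) ((t * g s - s * g t) / (g s - g t) + 1) with hr
  have hrt : t < r := by
    have := le_max_left (t + 1) ((t * g s - s * g t) / (g s - g t) + 1)
    linarith
  have hrs : s < r := lt_trans hlt hrt
  have hr0 : 0 ≤ r := le_of_lt (lt_of_le_of_lt hs hrs)
  have hrbig : (t * g s - s * g t) / (g s - g t) < r := by
    have := le_max_right (t + 1) ((t * g s - s * g t) / (g s - g t) + 1)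
    linarith
  rw [div_lt_iff₀ (by linarith : (0:ℝ) < g s - g t)] at hrbig
  set a := (r - t) / (r - s) with ha
  set b := (t - s) / (r - s) with hb
  have hrspos : 0 < r - s := by linarith
  have ha0 : 0 ≤ a := div_nonneg (by linarith) hrspos.le
  have hb0 : 0 ≤ b := div_nonneg (by linarith) hrspos.le
  have hab : a + b = 1 := by
    rw [ha, hb, ← add_div, show r - t + (t - s) = r - s by ring]
    exact div_self hrspos.ne'
  have hcomb : a * s + b * r = t := by
    rw [ha, hb]
    field_simp
    ring
  have h2 := hg.2 (mem_Ici.mpr hs) (mem_Ici.mpr hr0) ha0 hb0 hab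
  simp only [smul_eq_mul] at h2
  rw [hcomb] at h2
  -- a * g s + b * g r ≤ g t , g r ≥ 0
  have hgr0 : 0 ≤ g r := h0 r hr0
  have hkey : a * g s ≤ g t := by nlinarith
  rw [ha, div_mul_eq_mul_div, div_le_iff₀ hrspos] at hkey
  nlinarith

lemma concave_interval {g : ℝ → ℝ} (hg : ConcaveOn ℝ (Ici (0:ℝ)) g) {c T t0 tS : ℝ}
    (hT : 0 ≤ T) (h1 : T ≤ t0) (h2 : t0 ≤ tS) (hgT : c ≤ g T) (hgS : c ≤ g tS) :
    c ≤ g t0 := by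
  rcases eq_or_lt_of_le (h1.trans h2) with h | hlt
  · have : t0 = T := le_antisymm (by linarith) h1
    rw [this]; exact hgT
  set a := (tS - t0) / (tS - T) with ha
  set b := (t0 - T) / (tS - T) with hb
  have hpos : 0 < tS - T := by linarith
  have ha0 : 0 ≤ a := div_nonneg (by linarith) hpos.le
  have hb0 : 0 ≤ b := div_nonneg (by linarith) hpos.le
  have hab : a + b = 1 := by
    rw [ha, hb, ← add_div]
    field_simp
    ring
  have hcomb : a * T + b * tS = t0 := by
    rw [ha, hb]
    field_simp
    ring
  have h3 := hg.2 (mem_Ici.mpr hT) (mem_Ici.mpr (by linarith : (0:ℝ) ≤ tS)) ha0 hb0 hab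
  simp only [smul_eq_mul] at h3
  rw [hcomb] at h3
  have e1 : a * c ≤ a * g T := mul_le_mul_of_nonneg_left hgT ha0
  have e2 : b * c ≤ b * g tS := mul_le_mul_of_nonneg_left hgS hb0
  have h4 : a * c + b * c = c := by rw [← add_mul, hab, one_mul]
  linarith

end Multi

section Branch

variable {F : EuclideanSpace ℝ (Fin d) → ℝ} {Δ : ℝ} {L : NNReal}
  {x : EuclideanSpace ℝ (Fin d)}

lemma setH_mem_iff (hx0 : x ≠ 0) {t : ℝ} :
    t ∈ setH F Δ x ↔ 0 < t ∧ Δ + F (t • (‖x‖⁻¹ • x)) ≤ F 0 + t * Bdot F Δ (‖x‖⁻¹ • x) := by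
  unfold setH
  rw [mem_setOf_eq]
  have h1 : (t / ‖x‖) • x = t • (‖x‖⁻¹ • x) := by rw [div_eq_mul_inv, mul_smul]
  rw [h1, Bdot_smul]

lemma ell_ge_of_reach (hΔ : 0 < Δ) (hFconv : ConvexOn ℝ (orthant d) F)
    (hFlip : LipschitzOnWith L F (orthant d)) (hx : x ∈ orthant d) (hx0 : x ≠ 0)
    (hσ : sig F Δ x ≤ 1) (hne : (setH F Δ x).Nonempty) (hinf : sInf (setH F Δ x) ≤ ‖x‖) :
    F x + Δ ≤ F 0 + Bdot F Δ x := by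
  set u := ‖x‖⁻¹ • x with hu_def
  have hnx : (0:ℝ) < ‖x‖ := norm_pos_iff.mpr hx0
  have hu : u ∈ orthant d := smul_mem hx (inv_nonneg.mpr (norm_nonneg x))
  set g : ℝ → ℝ := fun t => F 0 + t * Bdot F Δ u - F (t • u) with hg
  have hgconc : ConcaveOn ℝ (Ici 0) g := concaveOn_ray hFconv hu
  have hmemH : ∀ t ∈ setH F Δ x, 0 < t ∧ Δ ≤ g t := by
    intro t htH
    have h := (setH_mem_iff hx0).mp htH
    refine ⟨h.1, ?_⟩
    have h2 := h.2
    rw [hg]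
    dsimp only
    linarith
  have hbdd : BddBelow (setH F Δ x) := ⟨0, fun t ht => (hmemH t ht).1.le⟩
  have hT0 : 0 ≤ sInf (setH F Δ x) := le_csInf hne (fun t ht => (hmemH t ht).1.le)
  set T := sInf (setH F Δ x) with hT
  have hgcont : ContinuousOn g (Ici 0) := by
    have h1 : ContinuousOn (fun t : ℝ => F (t • u)) (Ici 0) := by
      apply hFlip.continuousOn.comp
      · exact (continuous_id.smul continuous_const).continuousOn
      · intro t ht
        exact smul_mem hu (mem_Ici.mp ht)
    exact (continuousOn_const.add (continuousOn_id.mul continuousOn_const)).sub h1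
  have hgT : Δ ≤ g T := by
    by_contra hcl
    push_neg at hcl
    have hcw := hgcont T (mem_Ici.mpr hT0)
    rw [Metric.continuousWithinAt_iff] at hcw
    obtain ⟨δ, hδ, hball⟩ := hcw (Δ - g T) (by linarith)
    have hstep : ∀ t ∈ setH F Δ x, T + δ ≤ t := by
      intro t htH
      obtain ⟨htpos, htg⟩ := hmemH t htH
      by_contra hcc
      push_neg at hcc
      have hTt : T ≤ t := csInf_le hbdd htH
      have hd : dist t T < δ := by
        rw [Real.dist_eq, abs_of_nonneg (by linarith)]
        linarith
      have hb2 := hball (mem_Ici.mpr htpos.le) hd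
      rw [Real.dist_eq] at hb2
      have := (abs_lt.mp hb2).2
      linarith
    have := le_csInf hne hstep
    rw [← hT] at this
    linarith
  have hσ0 : 0 ≤ sig F Δ x := sig_nonneg hΔ hFlip hx
  have hgoal : Δ ≤ g ‖x‖ := by
    rcases eq_or_lt_of_le hσ0 with hzero | hpos
    · have h0 : ∀ t, 0 ≤ t → 0 ≤ g t := by
        intro t ht0
        have hsig : sig F Δ (t • u) = 0 := by
          rw [hu_def, sig_smul, sig_smul, ← hzero, mul_zero, mul_zero]
        have hm := M_main hΔ hFconv hFlip (smul_mem hu ht0)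
          (by rw [hsig]; norm_num : sig F Δ (t • u) ≤ 1)
        rw [hsig, zero_mul] at hm
        have hB : Bdot F Δ (t • u) = t * Bdot F Δ u := Bdot_smul t u
        rw [hg]
        dsimp only
        linarith
      have := mono_of_concave_nonneg hgconc h0 hT0 hinf
      linarith
    · set tS := ‖x‖ / sig F Δ x with htS
      have htSx : ‖x‖ ≤ tS := by
        rw [htS, le_div_iff₀ hpos]
        nlinarith
      have hsig1 : sig F Δ (tS • u) = 1 := by
        rw [hu_def, sig_smul, sig_smul, htS]
        field_simp
      have hm := M_main hΔ hFconv hFlip (smul_mem hu (le_trans hnx.le htSx))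
        (le_of_eq hsig1)
      rw [hsig1, one_mul] at hm
      have hgS : Δ ≤ g tS := by
        have hB : Bdot F Δ (tS • u) = tS * Bdot F Δ u := Bdot_smul tS u
        rw [hg]
        dsimp only
        linarith
      exact concave_interval hgconc hT0 hinf htSx hgT hgS
  have hxu : ‖x‖ • u = x := by
    rw [hu_def, smul_smul, mul_inv_cancel₀ hnx.ne', one_smul]
  have hBd : ‖x‖ * Bdot F Δ u = Bdot F Δ x := by
    rw [hu_def, Bdot_smul, ← mul_assoc, mul_inv_cancel₀ hnx.ne', one_mul]
  rw [hg] at hgoal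
  dsimp only at hgoal
  rw [hxu, hBd] at hgoal
  linarith

lemma reach_of_sig_gt (hΔ : 0 < Δ) (hFconv : ConvexOn ℝ (orthant d) F)
    (hFlip : LipschitzOnWith L F (orthant d)) (hx : x ∈ orthant d)
    (hσ : 1 < sig F Δ x) :
    (setH F Δ x).Nonempty ∧ sInf (setH F Δ x) ≤ ‖x‖ := by
  have hx0 : x ≠ 0 := by
    intro h
    rw [h, sig_zero] at hσ
    linarith
  have hnx : (0:ℝ) < ‖x‖ := norm_pos_iff.mpr hx0
  have hσpos : 0 < sig F Δ x := by linarith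
  set c := (sig F Δ x)⁻¹ with hc
  have hcpos : 0 < c := inv_pos.mpr hσpos
  have hc1 : c ≤ 1 := by
    rw [hc, inv_le_one_iff₀]
    right; linarith
  have hsig1 : sig F Δ (c • x) = 1 := by
    rw [sig_smul, hc, inv_mul_cancel₀ hσpos.ne']
  have hm := M_main hΔ hFconv hFlip (smul_mem hx hcpos.le) (le_of_eq hsig1)
  rw [hsig1, one_mul] at hm
  set t := c * ‖x‖ with ht
  have htpos : 0 < t := mul_pos hcpos hnx
  have htmem : t ∈ setH F Δ x := by
    constructor
    · exact htpos
    · have h1 : (t / ‖x‖) • x = c • x := by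
        rw [ht, mul_div_assoc, div_self hnx.ne', mul_one]
      rw [h1]
      linarith
  have hbdd : BddBelow (setH F Δ x) := ⟨0, fun s hs => hs.1.le⟩
  refine ⟨⟨t, htmem⟩, le_trans (csInf_le hbdd htmem) ?_⟩
  rw [ht]
  nlinarith

lemma ell_lt_of_else (hx0 : x ≠ 0)
    (h : ¬((setH F Δ x).Nonempty ∧ sInf (setH F Δ x) ≤ ‖x‖)) :
    F 0 + Bdot F Δ x < F x + Δ := by
  by_contra hc
  push_neg at hc
  have hnx : (0:ℝ) < ‖x‖ := norm_pos_iff.mpr hx0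
  have hmem : ‖x‖ ∈ setH F Δ x := by
    constructor
    · exact hnx
    · rw [div_self hnx.ne', one_smul]
      linarith
  have hbdd : BddBelow (setH F Δ x) := ⟨0, fun s hs => hs.1.le⟩
  exact h ⟨⟨_, hmem⟩, csInf_le hbdd hmem⟩

end Branch

section Final

variable {F : EuclideanSpace ℝ (Fin d) → ℝ} {Δ : ℝ} {L : NNReal}

lemma Bdot_zero : Bdot F Δ (0 : EuclideanSpace ℝ (Fin d)) = 0 := by
  rw [Bdot]
  apply Finset.sum_eq_zero
  intro i _
  have : (0 : EuclideanSpace ℝ (Fin d)) i = 0 := rfl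
  rw [this, mul_zero]

lemma Bdot_add (x y : EuclideanSpace ℝ (Fin d)) :
    Bdot F Δ (x + y) = Bdot F Δ x + Bdot F Δ y := by
  rw [Bdot, Bdot, Bdot, ← Finset.sum_add_distrib]
  apply Finset.sum_congr rfl
  intro i _
  have : (x + y) i = x i + y i := rfl
  rw [this]
  ring

/-- The key identification of `R` as a pasting of `min(ℓ, F + Δ)` and `F + Δ`. -/
lemma R_eq (hΔ : 0 < Δ) (hFconv : ConvexOn ℝ (orthant d) F)
    (hFlip : LipschitzOnWith L F (orthant d)) {x : EuclideanSpace ℝ (Fin d)}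
    (hx : x ∈ orthant d) :
    Rfun F Δ x = if sig F Δ x ≤ 1
      then min (F 0 + Bdot F Δ x) (F x + Δ) else F x + Δ := by
  by_cases hx0 : x = 0
  · subst hx0
    rw [Rfun, if_pos rfl, sig_zero, if_pos (by norm_num), Bdot_zero, add_zero,
      min_eq_left (by linarith)]
  · rw [Rfun, if_neg hx0]
    by_cases hreach : (setH F Δ x).Nonempty ∧ sInf (setH F Δ x) ≤ ‖x‖
    · rw [if_pos hreach]
      by_cases hσ : sig F Δ x ≤ 1
      · rw [if_pos hσ, min_eq_right]
        exact ell_ge_of_reach hΔ hFconv hFlip hx hx0 hσ hreach.1 hreach.2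
      · rw [if_neg hσ]
    · rw [if_neg hreach]
      have hσ : sig F Δ x ≤ 1 := by
        by_contra hσ
        push_neg at hσ
        exact hreach (reach_of_sig_gt hΔ hFconv hFlip hx hσ)
      rw [if_pos hσ, min_eq_left (ell_lt_of_else hx0 hreach).le]

/-- coordinatewise positive part, as a map of Euclidean space -/
def posPart (x : EuclideanSpace ℝ (Fin d)) : EuclideanSpace ℝ (Fin d) :=
  WithLp.toLp 2 (fun i => max (x i) 0)

lemma posPart_apply (x : EuclideanSpace ℝ (Fin d)) (i : Fin d) :
    posPart x i = max (x i) 0 := rfl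

lemma posPart_mem (x : EuclideanSpace ℝ (Fin d)) : posPart x ∈ orthant d :=
  fun i => le_max_right _ _

lemma posPart_eq_self {x : EuclideanSpace ℝ (Fin d)} (hx : x ∈ orthant d) :
    posPart x = x := by
  ext i
  rw [posPart_apply, max_eq_left (hx i)]

lemma posPart_continuous : Continuous (posPart : EuclideanSpace ℝ (Fin d) → _) := by
  have : LipschitzWith 1 (posPart : EuclideanSpace ℝ (Fin d) → _) := by
    apply LipschitzWith.of_dist_le_mul
    intro x y
    rw [NNReal.coe_one, one_mul, EuclideanSpace.dist_eq, EuclideanSpace.dist_eq]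
    apply Real.sqrt_le_sqrt
    apply Finset.sum_le_sum
    intro i _
    rw [Real.dist_eq, Real.dist_eq, posPart_apply, posPart_apply]
    have h := abs_max_sub_max_le_abs (x i) (y i) 0
    exact pow_le_pow_left₀ (abs_nonneg _) h 2
  exact this.continuous

lemma sig_continuous : Continuous (sig F Δ) := by
  apply continuous_finset_sum
  intro i _
  exact continuous_const.mul (EuclideanSpace.proj i).continuous

lemma Bdot_continuous : Continuous (Bdot F Δ) := by
  apply continuous_finset_sum
  intro i _
  exact continuous_const.mul (EuclideanSpace.proj i).continuous

lemma R_continuousOn (hΔ : 0 < Δ) (hFconv : ConvexOn ℝ (orthant d) F)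
    (hFlip : LipschitzOnWith L F (orthant d)) :
    ContinuousOn (Rfun F Δ) (orthant d) := by
  classical
  set G : EuclideanSpace ℝ (Fin d) → ℝ := fun y =>
    if sig F Δ (posPart y) ≤ 1
      then min (F 0 + Bdot F Δ (posPart y)) (F (posPart y) + Δ)
      else F (posPart y) + Δ with hG
  have hFpos : Continuous fun y : EuclideanSpace ℝ (Fin d) => F (posPart y) :=
    hFlip.continuousOn.comp_continuous posPart_continuous posPart_mem
  have hGcont : Continuous G := by
    apply Continuous.if_le
    · exact continuous_const.add (Bdot_continuous.comp posPart_continuous) |>.min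
        (hFpos.add continuous_const)
    · exact hFpos.add continuous_const
    · exact sig_continuous.comp posPart_continuous
    · exact continuous_const
    · intro y hy
      apply min_eq_right
      have hm := M_main hΔ hFconv hFlip (posPart_mem y) (le_of_eq hy)
      rw [hy, one_mul] at hm
      linarith
  apply hGcont.continuousOn.congr
  intro x hx
  rw [hG]
  dsimp only
  rw [posPart_eq_self hx]
  exact R_eq hΔ hFconv hFlip hx

end Final

end RmemGAux

/-- The function `R` belongs to the class `𝒢`. -/
theorem R_mem_G {d : ℕ} (hd : 0 < d) (Δ : ℝ) (hΔ : 0 < Δ)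
    (F : EuclideanSpace ℝ (Fin d) → ℝ)
    (hF0 : ∀ x ∈ orthant d, 0 ≤ F x)
    (hFconv : ConvexOn ℝ (orthant d) F)
    (L : NNReal) (hFlip : LipschitzOnWith L F (orthant d)) :
    memG F Δ (Rfun F Δ) := by
  classical
  have hbounds : ∀ x ∈ orthant d, F x ≤ Rfun F Δ x ∧ Rfun F Δ x ≤ F x + Δ := by
    intro x hx
    rw [RmemGAux.R_eq hΔ hFconv hFlip hx]
    split
    · next hσ =>
      refine ⟨le_min ?_ (by linarith), min_le_right _ _⟩
      have hm := RmemGAux.M_main hΔ hFconv hFlip hx hσ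
      have hσ0 : 0 ≤ RmemGAux.sig F Δ x := RmemGAux.sig_nonneg hΔ hFlip hx
      nlinarith
    · next => exact ⟨by linarith, le_rfl⟩
  refine ⟨RmemGAux.R_continuousOn hΔ hFconv hFlip,
    fun x hx => le_trans (hF0 x hx) (hbounds x hx).1, hbounds, ?_⟩
  intro D hD hDconv hlt
  have hRD : ∀ x ∈ D, Rfun F Δ x = F 0 + Bdot F Δ x := by
    intro x hxD
    have hl := hlt x hxD
    by_cases hx0 : x = 0
    · subst hx0
      rw [Rfun, if_pos rfl, RmemGAux.Bdot_zero, add_zero]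
    · rw [Rfun, if_neg hx0] at hl ⊢
      by_cases hreach : (setH F Δ x).Nonempty ∧ sInf (setH F Δ x) ≤ ‖x‖
      · rw [if_pos hreach] at hl
        exact absurd hl (lt_irrefl _)
      · rw [if_neg hreach]
  refine ⟨hDconv, ?_⟩
  intro x hxD y hyD a b ha hb hab
  rw [hRD x hxD, hRD y hyD, hRD _ (hDconv hxD hyD ha hb hab)]
  rw [RmemGAux.Bdot_add, RmemGAux.Bdot_smul, RmemGAux.Bdot_smul]
  simp only [smul_eq_mul]
  have h4 : a * F 0 + b * F 0 = F 0 := by rw [← add_mul, hab, one_mul]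
  nlinarith [h4]

end
end

section
/- One-dimensional absorption property: if g(a) = F(a) + Δ for some a ≥ 0, then g(u) = F(u) + Δ for every u ≥ a. Equivalently, once a function of the class 𝒢 touches the upper barrier F + Δ on a half-line, it coincides with F + Δ from that point on. -/
open Set Topology Filter

/-- One-dimensional absorption property: if a member `g` of the class `𝒢`
(for a convex, Lipschitz `F : ℝ₊ → ℝ₊` and a penalty `Δ > 0`) touches the upper
barrier `F + Δ` at a point `a ≥ 0`, then `g = F + Δ` on all of `[a, ∞)`. -/
theorem absorption_one_dim (Δ : ℝ) (hΔ : 0 < Δ) (F g : ℝ → ℝ)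
    (hF0 : ∀ x ∈ Ici (0 : ℝ), 0 ≤ F x)
    (hFconv : ConvexOn ℝ (Ici (0 : ℝ)) F)
    (L : NNReal) (hFlip : LipschitzOnWith L F (Ici (0 : ℝ)))
    (hg0 : ∀ x ∈ Ici (0 : ℝ), 0 ≤ g x)
    (hgcont : ContinuousOn g (Ici (0 : ℝ)))
    (hgbound : ∀ x ∈ Ici (0 : ℝ), F x ≤ g x ∧ g x ≤ F x + Δ)
    (hgconc : ∀ I : Set ℝ, I ⊆ Ici (0 : ℝ) → Convex ℝ I →
      (∀ x ∈ I, g x < F x + Δ) → ConcaveOn ℝ I g)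
    (a : ℝ) (ha : 0 ≤ a) (hga : g a = F a + Δ) :
    ∀ u : ℝ, a ≤ u → g u = F u + Δ := by
  have hFcont : ContinuousOn F (Ici (0 : ℝ)) := hFlip.continuousOn
  have hcont : ContinuousOn (fun x => g x - F x) (Ici (0 : ℝ)) := hgcont.sub hFcont
  intro u hu
  rcases eq_or_lt_of_le hu with rfl | hau
  · exact hga
  by_contra hne
  have hu0 : (0 : ℝ) ≤ u := ha.trans hu
  have hgu_lt : g u < F u + Δ := lt_of_le_of_ne (hgbound u hu0).2 hne
  -- the last touching point `c` before `u`
  set S : Set ℝ := Icc a u ∩ (fun x => g x - (F x + Δ)) ⁻¹' {0} with hS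
  have hIccsub : Icc a u ⊆ Ici (0 : ℝ) := fun x hx => ha.trans hx.1
  have hScl : IsClosed S :=
    ContinuousOn.preimage_isClosed_of_isClosed
      ((hgcont.mono hIccsub).sub ((hFcont.mono hIccsub).add continuousOn_const))
      isClosed_Icc isClosed_singleton
  have haS : a ∈ S := ⟨⟨le_refl a, hau.le⟩, by simp [hga]⟩
  have hSbdd : BddAbove S := (bddAbove_Icc (a := a) (b := u)).mono inter_subset_left
  set c := sSup S with hc
  have hcS : c ∈ S := hScl.csSup_mem ⟨a, haS⟩ hSbdd
  obtain ⟨⟨hac, hcu_le⟩, hgc'⟩ := hcS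
  have hgc : g c = F c + Δ := by
    have : g c - (F c + Δ) = 0 := hgc'
    linarith
  have hc0 : (0 : ℝ) ≤ c := ha.trans hac
  have hcu : c < u := by
    rcases lt_or_eq_of_le hcu_le with h | h
    · exact h
    · exact absurd (h ▸ hgc) (ne_of_lt hgu_lt)
  have key : ∀ x, c < x → x ≤ u → g x < F x + Δ := by
    intro x hcx hxu
    have hx0 : (0 : ℝ) ≤ x := hc0.trans hcx.le
    refine lt_of_le_of_ne (hgbound x hx0).2 (fun hEq => ?_)
    have hxS : x ∈ S := ⟨⟨hac.trans hcx.le, hxu⟩, by simp [hEq]⟩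
    exact absurd (le_csSup hSbdd hxS) (not_le_of_gt hcx)
  set ε : ℝ := F u + Δ - g u with hε
  have hεpos : 0 < ε := by simp [hε]; linarith
  -- a point slightly to the right of `c` where `g - F` is close to `Δ`
  have hx_ex : ∃ x, x ∈ Ioo c u ∧ Δ - ε / 2 < g x - F x := by
    have hne' : (𝓝[Ioo c u] c).NeBot := by
      refine mem_closure_iff_nhdsWithin_neBot.mp ?_
      rw [closure_Ioo hcu.ne]
      exact ⟨le_refl c, hcu.le⟩
    have hsub : Ioo c u ⊆ Ici (0 : ℝ) := fun z hz => hc0.trans hz.1.le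
    have ht : Filter.Tendsto (fun x => g x - F x) (𝓝[Ioo c u] c) (𝓝 (g c - F c)) :=
      (hcont c hc0).mono_left (nhdsWithin_mono c hsub)
    have h1 : ∀ᶠ x in 𝓝[Ioo c u] c, Δ - ε / 2 < g x - F x :=
      ht.eventually (eventually_gt_nhds (by rw [hgc]; linarith))
    have h2 : ∀ᶠ x in 𝓝[Ioo c u] c, x ∈ Ioo c u := self_mem_nhdsWithin
    exact (h2.and h1).exists
  obtain ⟨x, hxmem, hhx⟩ := hx_ex
  have hx0 : (0 : ℝ) ≤ x := hc0.trans hxmem.1.le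
  by_cases hT : ∃ d, u ≤ d ∧ g d = F d + Δ
  · -- `g` touches `F + Δ` again at some `d > u`
    set T : Set ℝ := Ici u ∩ (fun x => g x - (F x + Δ)) ⁻¹' {0} with hTdef
    have hIcisub : Ici u ⊆ Ici (0 : ℝ) := fun z hz => hu0.trans hz
    have hTcl : IsClosed T :=
      ContinuousOn.preimage_isClosed_of_isClosed
        ((hgcont.mono hIcisub).sub ((hFcont.mono hIcisub).add continuousOn_const))
        isClosed_Ici isClosed_singleton
    obtain ⟨d₀, hd₀u, hd₀eq⟩ := hT
    have hd₀T : d₀ ∈ T := ⟨hd₀u, by simp [hd₀eq]⟩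
    have hTbdd : BddBelow T := ⟨u, fun z hz => hz.1⟩
    set d := sInf T with hd
    have hdT : d ∈ T := hTcl.csInf_mem ⟨d₀, hd₀T⟩ hTbdd
    obtain ⟨hud_le, hgd'⟩ := hdT
    have hgd : g d = F d + Δ := by
      have : g d - (F d + Δ) = 0 := hgd'
      linarith
    have hud : u < d := by
      rcases lt_or_eq_of_le (show u ≤ d from hud_le) with h | h
      · exact h
      · exact absurd (h ▸ hgd) (ne_of_lt hgu_lt)
    have keyd : ∀ z, u ≤ z → z < d → g z < F z + Δ := by
      intro z huz hzd
      refine lt_of_le_of_ne (hgbound z (hu0.trans huz)).2 (fun hEq => ?_)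
      have hzT : z ∈ T := ⟨huz, by simp [hEq]⟩
      exact absurd (csInf_le hTbdd hzT) (not_le_of_gt hzd)
    have hlt : ∀ z ∈ Ioo c d, g z < F z + Δ := by
      intro z hz
      rcases le_total z u with h | h
      · exact key z hz.1 h
      · exact keyd z h hz.2
    have hsubI : Ioo c d ⊆ Ici (0 : ℝ) := fun z hz => hc0.trans hz.1.le
    have hconcI : ConcaveOn ℝ (Ioo c d) (g - F) :=
      (hgconc _ hsubI (convex_Ioo c d) hlt).sub (hFconv.subset hsubI (convex_Ioo c d))
    -- a point slightly to the left of `d`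
    have hy_ex : ∃ y, y ∈ Ioo u d ∧ Δ - ε / 2 < g y - F y := by
      have hne' : (𝓝[Ioo u d] d).NeBot := by
        refine mem_closure_iff_nhdsWithin_neBot.mp ?_
        rw [closure_Ioo hud.ne]
        exact ⟨hud.le, le_refl d⟩
      have hsub : Ioo u d ⊆ Ici (0 : ℝ) := fun z hz => hu0.trans hz.1.le
      have hd0 : (0 : ℝ) ≤ d := hu0.trans hud.le
      have ht : Filter.Tendsto (fun z => g z - F z) (𝓝[Ioo u d] d) (𝓝 (g d - F d)) :=
        (hcont d hd0).mono_left (nhdsWithin_mono d hsub)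
      have h1 : ∀ᶠ z in 𝓝[Ioo u d] d, Δ - ε / 2 < g z - F z :=
        ht.eventually (eventually_gt_nhds (by rw [hgd]; linarith))
      have h2 : ∀ᶠ z in 𝓝[Ioo u d] d, z ∈ Ioo u d := self_mem_nhdsWithin
      exact (h2.and h1).exists
    obtain ⟨y, hymem, hhy⟩ := hy_ex
    have hxy : x < y := hxmem.2.trans hymem.1
    have hyx : (0 : ℝ) < y - x := by linarith
    set t : ℝ := (y - u) / (y - x) with htdef
    set s : ℝ := (u - x) / (y - x) with hsdef
    have ht0 : 0 < t := div_pos (by linarith [hymem.1]) hyx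
    have hs0 : 0 < s := div_pos (by linarith [hxmem.2]) hyx
    have hts : t + s = 1 := by
      rw [htdef, hsdef, ← add_div, div_eq_one_iff_eq hyx.ne']
      ring
    have hcomb : t * x + s * y = u := by
      rw [htdef, hsdef]
      field_simp
      ring
    have hcc := hconcI.2 (show x ∈ Ioo c d from ⟨hxmem.1, hxmem.2.trans hud⟩)
      (show y ∈ Ioo c d from ⟨hcu.trans hymem.1, hymem.2⟩) ht0.le hs0.le hts
    simp only [Pi.sub_apply, smul_eq_mul] at hcc
    rw [hcomb] at hcc
    have e1 : t * (Δ - ε / 2) + s * (Δ - ε / 2) = Δ - ε / 2 := by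
      rw [← add_mul, hts, one_mul]
    have e2 : g u - F u = Δ - ε := by rw [hε]; ring
    have m1 : t * (Δ - ε / 2) < t * (g x - F x) := mul_lt_mul_of_pos_left hhx ht0
    have m2 : s * (Δ - ε / 2) < s * (g y - F y) := mul_lt_mul_of_pos_left hhy hs0
    linarith
  · -- `g` never touches `F + Δ` after `u`
    push_neg at hT
    have key2 : ∀ z, u ≤ z → g z < F z + Δ := fun z hz =>
      lt_of_le_of_ne (hgbound z (hu0.trans hz)).2 (hT z hz)
    have hlt : ∀ z ∈ Ioi c, g z < F z + Δ := by
      intro z hz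
      rcases le_total z u with h | h
      · exact key z hz h
      · exact key2 z h
    have hsubI : Ioi c ⊆ Ici (0 : ℝ) := fun z hz => hc0.trans (le_of_lt hz)
    have hconcI : ConcaveOn ℝ (Ioi c) (g - F) :=
      (hgconc _ hsubI (convex_Ioi c) hlt).sub (hFconv.subset hsubI (convex_Ioi c))
    set m : ℝ := g u - F u with hm
    have hm0 : 0 ≤ m := by
      have := (hgbound u hu0).1
      simp [hm]; linarith
    have hmε : m = Δ - ε := by rw [hε, hm]; ring
    have hd2 : (0 : ℝ) < m + ε / 2 := by linarith
    set t0 : ℝ := m / (m + ε / 2) with ht0def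
    have ht00 : 0 ≤ t0 := div_nonneg hm0 hd2.le
    have ht01 : t0 < 1 := (div_lt_one hd2).mpr (by linarith)
    have h1t0 : 0 < 1 - t0 := by linarith
    set y : ℝ := max (u + 1) ((u - t0 * x) / (1 - t0) + 1) with hy
    have hyu : u < y := lt_of_lt_of_le (lt_add_one u) (le_max_left _ _)
    have hy2 : (u - t0 * x) / (1 - t0) < y :=
      lt_of_lt_of_le (lt_add_one _) (le_max_right _ _)
    have hy3 : u - t0 * x < y * (1 - t0) := (div_lt_iff₀ h1t0).mp hy2
    have hxy : x < y := hxmem.2.trans hyu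
    have hyx : (0 : ℝ) < y - x := by linarith
    set t : ℝ := (y - u) / (y - x) with htdef
    set s : ℝ := (u - x) / (y - x) with hsdef
    have ht0t : t0 < t := (lt_div_iff₀ hyx).mpr (by nlinarith)
    have ht0 : 0 < t := lt_of_le_of_lt ht00 ht0t
    have hs0 : 0 < s := div_pos (by linarith [hxmem.2]) hyx
    have hts : t + s = 1 := by
      rw [htdef, hsdef, ← add_div, div_eq_one_iff_eq hyx.ne']
      ring
    have hcomb : t * x + s * y = u := by
      rw [htdef, hsdef]
      field_simp
      ring
    have hcc := hconcI.2 (show x ∈ Ioi c from hxmem.1)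
      (show y ∈ Ioi c from hxmem.1.trans hxy) ht0.le hs0.le hts
    simp only [Pi.sub_apply, smul_eq_mul] at hcc
    rw [hcomb] at hcc
    have hy0 : (0 : ℝ) ≤ y := hu0.trans hyu.le
    have hFy : 0 ≤ g y - F y := by linarith [(hgbound y hy0).1]
    have hsy : 0 ≤ s * (g y - F y) := mul_nonneg hs0.le hFy
    have e2 : t0 * (m + ε / 2) = m := div_mul_cancel₀ m hd2.ne'
    have hhx' : m + ε / 2 < g x - F x := by linarith
    have h5 : t0 * (m + ε / 2) < t * (g x - F x) :=
      lt_trans (mul_lt_mul_of_pos_right ht0t hd2) (mul_lt_mul_of_pos_left hhx' ht0)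
    linarith
end

section
/- If A_i < ∞, then the infimum defining A_i is attained, i.e. B_i = (F_i(A_i)+Δ−F(0))/A_i ∈ ∂F_i(A_i); consequently the linear function t ↦ F(0) + B_i·t is tangent from the point (0, F(0)) to the function F_i + Δ: F(0) + B_i·t ≤ F_i(t) + Δ for every t ≥ 0, with equality at t = A_i. -/
open Set
open scoped Classical

noncomputable section

/-- If `A_i < ∞` (i.e. the defining set is nonempty), the infimum is attained:
`B_i = (F_i(A_i) + Δ - F(0))/A_i ∈ ∂F_i(A_i)`; consequently the line
`t ↦ F(0) + B_i t` is tangent from `(0, F(0))` to `F_i + Δ`: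
it lies below `F_i + Δ` on `ℝ₊` with equality at `t = A_i`. -/
theorem A_attained_and_tangent {d : ℕ} (hd : 0 < d) (Δ : ℝ) (hΔ : 0 < Δ)
    (F : EuclideanSpace ℝ (Fin d) → ℝ)
    (hF0 : ∀ x ∈ orthant d, 0 ≤ F x)
    (hFconv : ConvexOn ℝ (orthant d) F)
    (L : NNReal) (hFlip : LipschitzOnWith L F (orthant d))
    (i : Fin d) (hA : (setA F Δ i).Nonempty) :
    Bvar F Δ i = (Fi F i (Avar F Δ i) + Δ - F 0) / Avar F Δ i ∧
    Bvar F Δ i ∈ subdiff (Fi F i) (Avar F Δ i) ∧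
    (∀ t : ℝ, 0 ≤ t → F 0 + Bvar F Δ i * t ≤ Fi F i t + Δ) ∧
    F 0 + Bvar F Δ i * Avar F Δ i = Fi F i (Avar F Δ i) + Δ := by
  set φ := Fi F i with hφdef
  -- basic facts about the axis embedding
  have hsingle : ∀ t : ℝ, 0 ≤ t → (t • EuclideanSpace.single i (1:ℝ)) ∈ orthant d := by
    intro t ht j
    have : (t • EuclideanSpace.single i (1:ℝ)) j = t * (EuclideanSpace.single i (1:ℝ)) j := rfl
    rw [this, EuclideanSpace.single_apply]
    by_cases h : j = i <;> simp [h] <;> positivity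
  have hφ0 : φ 0 = F 0 := by simp [hφdef, Fi]
  -- Lipschitz bound for φ on [0,∞)
  have hlip : ∀ t s : ℝ, 0 ≤ t → 0 ≤ s → |φ t - φ s| ≤ L * |t - s| := by
    intro t s ht hs
    have := hFlip.dist_le_mul _ (hsingle t ht) _ (hsingle s hs)
    have hd2 : dist (t • EuclideanSpace.single i (1:ℝ)) (s • EuclideanSpace.single i (1:ℝ))
        = |t - s| := by
      rw [dist_eq_norm, ← sub_smul, norm_smul, EuclideanSpace.norm_single]
      simp [Real.norm_eq_abs]
    rw [hd2, Real.dist_eq] at this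
    exact this
  have hcont : ContinuousOn φ (Ici (0:ℝ)) := by
    have : LipschitzOnWith L φ (Ici (0:ℝ)) := by
      apply LipschitzOnWith.of_dist_le_mul
      intro x hx y hy
      rw [Real.dist_eq, Real.dist_eq]
      exact hlip x y hx hy
    exact this.continuousOn
  -- every element of setA satisfies Δ ≤ 2 L t
  have key : ∀ t ∈ setA F Δ i, Δ ≤ 2 * L * t := by
    rintro t ⟨ht, hv⟩
    set v := (φ t + Δ - F 0) / t with hvdef
    have hvt : v * t = φ t + Δ - F 0 := div_mul_cancel₀ _ ht.ne'
    -- v ≤ L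
    have h1 := hv (t + 1) (by linarith)
    have h2 : φ (t+1) - φ t ≤ L * 1 := by
      have := hlip (t+1) t (by linarith) ht.le
      have h3 : |t + 1 - t| = 1 := by norm_num
      rw [h3] at this
      calc φ (t+1) - φ t ≤ |φ (t+1) - φ t| := le_abs_self _
        _ ≤ L * 1 := by simpa using this
    have hvL : v ≤ L := by
      have : v * (t + 1 - t) = v := by ring_nf
      nlinarith [h1]
    -- φ t - F 0 ≥ -(L t)
    have h4 : -(L * t) ≤ φ t - F 0 := by
      have := hlip t 0 ht.le le_rfl
      rw [hφ0] at this
      have h5 : |t - 0| = t := by rw [sub_zero, abs_of_pos ht]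
      rw [h5] at this
      have := neg_abs_le (φ t - F 0)
      nlinarith [abs_nonneg (φ t - F 0), hlip t 0 ht.le le_rfl]
    nlinarith [hvt, mul_le_mul_of_nonneg_right hvL ht.le]
  -- L is positive
  obtain ⟨t₀, ht₀⟩ := hA
  have hL : 0 < (L:ℝ) := by
    have := key t₀ ht₀
    nlinarith [ht₀.1]
  set c : ℝ := Δ / (2 * L) with hcdef
  have hc : 0 < c := by positivity
  have hsub : setA F Δ i ⊆ Ici c := by
    intro t ht
    have := key t ht
    rw [mem_Ici, hcdef, div_le_iff₀ (by positivity)]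
    linarith [this]
  -- setA is closed
  have hsetA : setA F Δ i = ⋂ s ∈ Ici (0:ℝ),
      (Ici c ∩ {t | φ t * t + (φ t + Δ - F 0) * (s - t) - φ s * t ≤ 0}) := by
    ext t
    constructor
    · intro ht
      have htc : t ∈ Ici c := hsub ht
      have htpos : 0 < t := ht.1
      simp only [mem_iInter, mem_inter_iff, mem_setOf_eq]
      intro s hs
      refine ⟨htc, ?_⟩
      have h1 := ht.2 s hs
      have hexp : (φ t + (φ t + Δ - F 0)/t * (s - t)) * t
          = φ t * t + (φ t + Δ - F 0) * (s - t) := by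
        field_simp
      nlinarith [mul_le_mul_of_nonneg_right h1 htpos.le]
    · intro ht
      simp only [mem_iInter, mem_inter_iff, mem_setOf_eq] at ht
      have htc : t ∈ Ici c := (ht 0 (mem_Ici.2 le_rfl)).1
      have htpos : 0 < t := lt_of_lt_of_le hc htc
      refine ⟨htpos, ?_⟩
      intro s hs
      have h1 := (ht s hs).2
      have hexp : (φ t + (φ t + Δ - F 0)/t * (s - t)) * t
          = φ t * t + (φ t + Δ - F 0) * (s - t) := by
        field_simp
      have h2 : (φ t + (φ t + Δ - F 0)/t * (s - t)) * t ≤ φ s * t := by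
        rw [hexp]; linarith
      exact le_of_mul_le_mul_right h2 htpos
  have hIcisub : Ici c ⊆ Ici (0:ℝ) := Ici_subset_Ici.2 hc.le
  have hclosed : IsClosed (setA F Δ i) := by
    rw [hsetA]
    apply isClosed_biInter
    intro s hs
    have hφc : ContinuousOn φ (Ici c) := hcont.mono hIcisub
    have hg : ContinuousOn (fun t => φ t * t + (φ t + Δ - F 0) * (s - t) - φ s * t)
        (Ici c) := by
      apply ContinuousOn.sub
      apply ContinuousOn.add
      · exact hφc.mul continuousOn_id
      · exact ((hφc.add continuousOn_const).sub continuousOn_const).mul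
          (continuousOn_const.sub continuousOn_id)
      · exact continuousOn_const.mul continuousOn_id
    have : IsClosed (Ici c ∩ (fun t => φ t * t + (φ t + Δ - F 0) * (s - t) - φ s * t) ⁻¹' Iic (0:ℝ)) :=
      hg.preimage_isClosed_of_isClosed isClosed_Ici isClosed_Iic
    convert this using 1
    rfl
  -- the infimum is attained
  have hAmem : Avar F Δ i ∈ setA F Δ i :=
    hclosed.csInf_mem ⟨t₀, ht₀⟩ ⟨c, fun x hx => hsub hx⟩
  set A := Avar F Δ i with hAdef
  obtain ⟨hApos, hAsub⟩ := hAmem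
  have hB : Bvar F Δ i = (φ A + Δ - F 0) / A := by
    rw [Bvar, if_pos ⟨t₀, ht₀⟩]
  set v := (φ A + Δ - F 0) / A with hvdef
  have hvA : v * A = φ A + Δ - F 0 := div_mul_cancel₀ _ hApos.ne'
  refine ⟨hB, ?_, ?_, ?_⟩
  · rw [hB]; exact hAsub
  · intro t ht
    rw [hB]
    have h1 := hAsub t ht
    have : v * t = v * A + v * (t - A) := by ring
    rw [this]
    linarith
  · rw [hB]
    linarith


end
end

section
/- Let J = { i : A_i < ∞ }. For every x ∈ ℝ^d_+, if F(x) > F(0) + ⟨x, B⟩ then Σ_{i∈J} x_i/A_i > 1. -/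
open Set
open scoped Classical

noncomputable section

section Helpers

variable {d : ℕ} {F : EuclideanSpace ℝ (Fin d) → ℝ} {Δ : ℝ} {L : NNReal} {i : Fin d}

lemma smul_single_mem_orthant (i : Fin d) {t : ℝ} (ht : 0 ≤ t) :
    t • EuclideanSpace.single i (1 : ℝ) ∈ orthant d := by
  intro j
  simp only [PiLp.smul_apply, EuclideanSpace.single_apply, smul_eq_mul]
  by_cases hji : j = i <;> simp [hji, ht]

lemma zero_mem_orthant : (0 : EuclideanSpace ℝ (Fin d)) ∈ orthant d := by
  intro j; simp

lemma Fi_zero : Fi F i 0 = F 0 := by simp [Fi]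

lemma fi_convexOn (hFconv : ConvexOn ℝ (orthant d) F) (i : Fin d) :
    ConvexOn ℝ (Ici 0) (Fi F i) := by
  refine ⟨convex_Ici 0, ?_⟩
  intro a ha b hb p q hp hq hpq
  have := hFconv.2 (smul_single_mem_orthant i ha) (smul_single_mem_orthant i hb) hp hq hpq
  simpa [Fi, add_smul, mul_smul, smul_eq_mul] using this

lemma fi_lip (hFlip : LipschitzOnWith L F (orthant d)) (i : Fin d) {s t : ℝ}
    (hs : 0 ≤ s) (ht : 0 ≤ t) : |Fi F i s - Fi F i t| ≤ (L : ℝ) * |s - t| := by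
  have h := hFlip.dist_le_mul _ (smul_single_mem_orthant i hs) _ (smul_single_mem_orthant i ht)
  rw [Real.dist_eq] at h
  refine h.trans ?_
  rw [dist_eq_norm, ← sub_smul, norm_smul, EuclideanSpace.norm_single]
  simp [Real.norm_eq_abs]

lemma subdiff_le_L (hFlip : LipschitzOnWith L F (orthant d)) {t v : ℝ} (ht : 0 < t)
    (hv : v ∈ subdiff (Fi F i) t) : v ≤ (L : ℝ) := by
  have h2 := hv (2 * t) (by linarith)
  have hl := fi_lip hFlip i (by linarith : (0:ℝ) ≤ 2 * t) ht.le
  rw [abs_le] at hl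
  have habs : |2 * t - t| = t := by rw [abs_of_nonneg] <;> linarith
  rw [habs] at hl
  nlinarith [hl.2]

lemma setA_lb (hΔ : 0 < Δ) (hFlip : LipschitzOnWith L F (orthant d)) {t : ℝ}
    (ht : t ∈ setA F Δ i) : Δ / (2 * (L : ℝ) + 1) ≤ t := by
  obtain ⟨htpos, hsub⟩ := ht
  have hvL := subdiff_le_L (i := i) hFlip htpos hsub
  have hl := fi_lip hFlip i htpos.le le_rfl
  rw [Fi_zero, abs_le] at hl
  have habs : |t - 0| = t := by rw [abs_of_nonneg] <;> linarith
  rw [habs] at hl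
  have hL0 : (0:ℝ) ≤ (L : ℝ) := L.coe_nonneg
  rw [div_le_iff₀ (by linarith)]
  have := (div_le_iff₀ htpos).mp hvL
  nlinarith [hl.1]

lemma avar_pos (hΔ : 0 < Δ) (hFlip : LipschitzOnWith L F (orthant d))
    (hne : (setA F Δ i).Nonempty) : 0 < Avar F Δ i := by
  have hL0 : (0:ℝ) ≤ (L : ℝ) := L.coe_nonneg
  have : Δ / (2 * (L : ℝ) + 1) ≤ Avar F Δ i :=
    le_csInf hne fun t ht => setA_lb hΔ hFlip ht
  have hpos : 0 < Δ / (2 * (L : ℝ) + 1) := by positivity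
  linarith

lemma fi_avar (hΔ : 0 < Δ) (hFlip : LipschitzOnWith L F (orthant d))
    (hne : (setA F Δ i).Nonempty) :
    Fi F i (Avar F Δ i) = F 0 + Bvar F Δ i * Avar F Δ i - Δ := by
  have hA := avar_pos hΔ hFlip hne
  rw [Bvar, if_pos hne, div_mul_cancel₀ _ hA.ne']
  ring

lemma notJ_bound (hFconv : ConvexOn ℝ (orthant d) F)
    (hFlip : LipschitzOnWith L F (orthant d))
    (hemp : ¬(setA F Δ i).Nonempty) {s : ℝ} (hs : 0 < s) :
    Fi F i s ≤ F 0 + Bvar F Δ i * s := by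
  set φ := Fi F i with hφ
  have hconv := fi_convexOn hFconv i
  set T : Set ℝ := (fun u => (φ u - φ s) / (u - s)) '' Ioi s with hT
  have hTne : T.Nonempty := ⟨_, ⟨s + 1, by simp [hs], rfl⟩⟩
  have hTbd : BddBelow T := by
    refine ⟨-(L : ℝ), ?_⟩
    rintro _ ⟨u, hu, rfl⟩
    rw [mem_Ioi] at hu
    have hl := fi_lip hFlip i (by linarith : (0:ℝ) ≤ u) hs.le
    rw [abs_le, abs_of_pos (by linarith : (0:ℝ) < u - s)] at hl
    rw [le_div_iff₀ (by linarith : (0:ℝ) < u - s)]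
    nlinarith [hl.1]
  set m := sInf T with hm
  have hmem_sub : m ∈ subdiff φ s := by
    intro r hr
    rcases lt_trichotomy r s with hrs | hrs | hrs
    · have hlb : (φ s - φ r) / (s - r) ≤ m := by
        refine le_csInf hTne ?_
        rintro _ ⟨u, hu, rfl⟩
        rw [mem_Ioi] at hu
        exact hconv.slope_mono_adjacent hr (by linarith : (0:ℝ) ≤ u) hrs hu
      have h1 : φ s - φ r ≤ m * (s - r) := by
        rw [div_le_iff₀ (by linarith : (0:ℝ) < s - r)] at hlb
        linarith
      nlinarith
    · subst hrs; simp
    · have hub : m ≤ (φ r - φ s) / (r - s) := csInf_le hTbd ⟨r, hrs, rfl⟩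
      have h1 : m * (r - s) ≤ φ r - φ s := by
        rw [le_div_iff₀ (by linarith : (0:ℝ) < r - s)] at hub
        linarith
      linarith
  have hm_ge : (φ s - φ 0) / (s - 0) ≤ m := by
    refine le_csInf hTne ?_
    rintro _ ⟨u, hu, rfl⟩
    rw [mem_Ioi] at hu
    exact hconv.slope_mono_adjacent self_mem_Ici (by linarith : (0:ℝ) ≤ u) hs hu
  have hUbd : BddAbove (⋃ t ∈ Ioi (0 : ℝ), subdiff φ t) := by
    refine ⟨(L : ℝ), ?_⟩
    rintro v hv
    simp only [mem_iUnion, mem_Ioi] at hv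
    obtain ⟨t, ht, hvt⟩ := hv
    exact subdiff_le_L (i := i) hFlip ht hvt
  have hm_le : m ≤ sSup (⋃ t ∈ Ioi (0 : ℝ), subdiff φ t) := by
    refine le_csSup hUbd ?_
    simp only [mem_iUnion, mem_Ioi]
    exact ⟨s, hs, hmem_sub⟩
  rw [Bvar, if_neg hemp]
  rw [sub_zero] at hm_ge
  rw [div_le_iff₀ hs] at hm_ge
  have hφ0 : φ 0 = F 0 := Fi_zero
  nlinarith [mul_le_mul_of_nonneg_right hm_le hs.le]

end Helpers

/-- Let `J = {i : A_i < ∞}`. If `F(x) > F(0) + ⟨x, B⟩` for some `x` in the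
nonnegative orthant, then `Σ_{i ∈ J} x_i / A_i > 1`. -/
theorem sum_gt_one_of_F_gt {d : ℕ} (hd : 0 < d) (Δ : ℝ) (hΔ : 0 < Δ)
    (F : EuclideanSpace ℝ (Fin d) → ℝ)
    (hF0 : ∀ x ∈ orthant d, 0 ≤ F x)
    (hFconv : ConvexOn ℝ (orthant d) F)
    (L : NNReal) (hFlip : LipschitzOnWith L F (orthant d))
    (x : EuclideanSpace ℝ (Fin d)) (hx : x ∈ orthant d)
    (h : F 0 + Bdot F Δ x < F x) :
    1 < ∑ i ∈ Finset.univ.filter (fun i => (setA F Δ i).Nonempty), x i / Avar F Δ i := by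
  classical
  by_contra hcon
  push_neg at hcon
  have hxnn : ∀ i, 0 ≤ x i := hx
  have key : ∀ ε : ℝ, 0 < ε → ε < 1 → F ((1 - ε) • x) ≤ F 0 + (1 - ε) * Bdot F Δ x := by
    intro ε hε hε1
    set X := ∑ i, x i with hX
    have hXnn : 0 ≤ X := Finset.sum_nonneg fun i _ => hxnn i
    set ε' := ε / (X + 1) with hε'def
    have hε'pos : 0 < ε' := div_pos hε (by linarith)
    -- weights and points
    set wi : Fin d → ℝ := fun i =>
      if (setA F Δ i).Nonempty then (1 - ε) * x i / Avar F Δ i else ε' * x i with hwi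
    set pi : Fin d → EuclideanSpace ℝ (Fin d) := fun i =>
      (if (setA F Δ i).Nonempty then Avar F Δ i else (1 - ε) / ε') •
        EuclideanSpace.single i (1 : ℝ) with hpi
    have hwinn : ∀ i, 0 ≤ wi i := by
      intro i
      simp only [hwi]
      split_ifs with hne
      · have hA := avar_pos hΔ hFlip hne
        exact div_nonneg (mul_nonneg (by linarith) (hxnn i)) hA.le
      · exact mul_nonneg hε'pos.le (hxnn i)
    have hwisum : ∑ i, wi i ≤ 1 := by
      have hsplit : ∑ i, wi i =
          (∑ i ∈ Finset.univ.filter (fun i => (setA F Δ i).Nonempty),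
            (1 - ε) * x i / Avar F Δ i) +
          (∑ i ∈ Finset.univ.filter (fun i => ¬(setA F Δ i).Nonempty), ε' * x i) := by
        rw [hwi, Finset.sum_ite]
      have h1 : (∑ i ∈ Finset.univ.filter (fun i => (setA F Δ i).Nonempty),
          (1 - ε) * x i / Avar F Δ i) ≤ 1 - ε := by
        have : (∑ i ∈ Finset.univ.filter (fun i => (setA F Δ i).Nonempty),
            (1 - ε) * x i / Avar F Δ i) = (1 - ε) *
            ∑ i ∈ Finset.univ.filter (fun i => (setA F Δ i).Nonempty), x i / Avar F Δ i := by
          rw [Finset.mul_sum]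
          exact Finset.sum_congr rfl fun i _ => by ring
        rw [this]
        nlinarith
      have h2 : (∑ i ∈ Finset.univ.filter (fun i => ¬(setA F Δ i).Nonempty), ε' * x i) ≤ ε := by
        have hle : (∑ i ∈ Finset.univ.filter (fun i => ¬(setA F Δ i).Nonempty), ε' * x i)
            ≤ ∑ i, ε' * x i := by
          refine Finset.sum_le_sum_of_subset_of_nonneg (Finset.filter_subset _ _) ?_
          intro i _ _
          exact mul_nonneg hε'pos.le (hxnn i)
        have heq : ∑ i, ε' * x i = ε' * X := by rw [hX, Finset.mul_sum]
        have : ε' * X ≤ ε := by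
          rw [hε'def, div_mul_eq_mul_div, div_le_iff₀ (by linarith : (0:ℝ) < X + 1)]
          nlinarith
        linarith
      linarith
    -- Jensen
    set w : Option (Fin d) → ℝ := fun o => o.elim (1 - ∑ i, wi i) wi with hw
    set p : Option (Fin d) → EuclideanSpace ℝ (Fin d) := fun o => o.elim 0 pi with hp
    have hw0 : ∀ o, 0 ≤ w o := by
      rintro (_ | i)
      · simpa [hw] using by linarith [hwisum]
      · exact hwinn i
    have hwsum : ∑ o : Option (Fin d), w o = 1 := by
      rw [Fintype.sum_option]
      simp [hw]
    have hmemp : ∀ o : Option (Fin d), p o ∈ orthant d := by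
      rintro (_ | i)
      · exact zero_mem_orthant
      · rw [hp]
        refine smul_single_mem_orthant i ?_
        split_ifs with hne
        · exact (avar_pos hΔ hFlip hne).le
        · exact div_nonneg (by linarith) hε'pos.le
    have hjensen := hFconv.map_sum_le (t := Finset.univ) (w := w) (p := p)
      (fun o _ => hw0 o) (by simpa using hwsum) (fun o _ => hmemp o)
    have hsum_p : ∑ o : Option (Fin d), w o • p o = (1 - ε) • x := by
      rw [Fintype.sum_option]
      have hnone : w none • p none = 0 := by simp [hw, hp]
      rw [hnone, zero_add]
      have hterm : ∀ i : Fin d, w (some i) • p (some i) =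
          ((1 - ε) * x i) • EuclideanSpace.single i (1 : ℝ) := by
        intro i
        simp only [hw, hp, hwi, hpi, Option.elim]
        split_ifs with hne
        · have hA := avar_pos hΔ hFlip hne
          rw [smul_smul, div_mul_cancel₀ _ hA.ne']
        · rw [smul_smul]
          congr 1
          field_simp
      rw [Finset.sum_congr rfl fun i _ => hterm i]
      ext j
      simp only [PiLp.smul_apply, smul_eq_mul]
      rw [WithLp.ofLp_sum, Finset.sum_apply]
      simp only [PiLp.smul_apply, EuclideanSpace.single_apply, smul_eq_mul]
      rw [Finset.sum_congr rfl (fun i _ => by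
        rw [mul_ite, mul_one, mul_zero] : ∀ i ∈ Finset.univ,
          (1 - ε) * x i * (if j = i then (1:ℝ) else 0) =
            if j = i then (1 - ε) * x i else 0)]
      rw [Finset.sum_ite_eq]
      simp
    have hvals : ∑ o : Option (Fin d), w o • F (p o) ≤ F 0 + (1 - ε) * Bdot F Δ x := by
      rw [Fintype.sum_option]
      have hterm : ∀ i : Fin d, w (some i) • F (p (some i)) ≤
          wi i * F 0 + (1 - ε) * (Bvar F Δ i * x i) := by
        intro i
        simp only [hw, hp, Option.elim, smul_eq_mul]
        by_cases hne : (setA F Δ i).Nonempty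
        · have hA := avar_pos hΔ hFlip hne
          have hFval : F (pi i) = F 0 + Bvar F Δ i * Avar F Δ i - Δ := by
            rw [hpi]
            simp only [if_pos hne]
            exact fi_avar hΔ hFlip hne
          rw [hFval]
          have hwival : wi i = (1 - ε) * x i / Avar F Δ i := by simp only [hwi]; simp [hne]
          have hprod : wi i * Avar F Δ i = (1 - ε) * x i := by
            rw [hwival, div_mul_cancel₀ _ hA.ne']
          have hwiv : 0 ≤ wi i := hwinn i
          have hΔw : 0 ≤ wi i * Δ := mul_nonneg hwiv hΔ.le
          have hexp : wi i * (F 0 + Bvar F Δ i * Avar F Δ i - Δ)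
              = wi i * F 0 + Bvar F Δ i * (wi i * Avar F Δ i) - wi i * Δ := by ring
          rw [hexp, hprod]
          have hring : Bvar F Δ i * ((1 - ε) * x i) = (1 - ε) * (Bvar F Δ i * x i) := by ring
          rw [hring]
          linarith
        · have hFval : F (pi i) ≤ F 0 + Bvar F Δ i * ((1 - ε) / ε') := by
            have := notJ_bound (Δ := Δ) hFconv hFlip hne
              (s := (1 - ε) / ε') (div_pos (by linarith) hε'pos)
            rw [hpi]
            simp only [if_neg hne]
            exact this
          have hwival : wi i = ε' * x i := by simp only [hwi]; simp [hne]
          have hwiv : 0 ≤ wi i := hwinn i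
          have := mul_le_mul_of_nonneg_left hFval hwiv
          refine this.trans (le_of_eq ?_)
          rw [hwival]
          field_simp
      have hsum2 : ∑ i : Fin d, w (some i) • F (p (some i)) ≤
          (∑ i, wi i) * F 0 + (1 - ε) * Bdot F Δ x := by
        calc ∑ i : Fin d, w (some i) • F (p (some i))
            ≤ ∑ i, (wi i * F 0 + (1 - ε) * (Bvar F Δ i * x i)) :=
              Finset.sum_le_sum fun i _ => hterm i
          _ = (∑ i, wi i) * F 0 + (1 - ε) * Bdot F Δ x := by
              rw [Finset.sum_add_distrib, Finset.sum_mul, ← Finset.mul_sum, Bdot]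
      have hnone : w none • F (p none) = (1 - ∑ i, wi i) * F 0 := by
        simp [hw, hp]
      rw [hnone]
      linarith
    calc F ((1 - ε) • x) = F (∑ o : Option (Fin d), w o • p o) := by rw [hsum_p]
      _ ≤ ∑ o : Option (Fin d), w o • F (p o) := by simpa using hjensen
      _ ≤ F 0 + (1 - ε) * Bdot F Δ x := hvals
  -- conclude
  set C := (L : ℝ) * ‖x‖ + |Bdot F Δ x| with hC
  have hC0 : 0 ≤ C := by positivity
  have hfinal : ∀ ε : ℝ, 0 < ε → ε < 1 → F x ≤ F 0 + Bdot F Δ x + ε * C := by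
    intro ε hε hε1
    have h1 := key ε hε hε1
    have hmem1 : (1 - ε) • x ∈ orthant d := by
      intro j
      simp only [PiLp.smul_apply, smul_eq_mul]
      exact mul_nonneg (by linarith) (hxnn j)
    have h2 := hFlip.dist_le_mul _ hx _ hmem1
    rw [Real.dist_eq, dist_eq_norm] at h2
    have hnorm : ‖x - (1 - ε) • x‖ = ε * ‖x‖ := by
      have hxx : x - (1 - ε) • x = ε • x := by
        rw [sub_smul, one_smul, sub_sub_cancel]
      rw [hxx, norm_smul, Real.norm_eq_abs, abs_of_pos hε]
    rw [hnorm, abs_le] at h2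
    have habs : ε * Bdot F Δ x ≤ ε * |Bdot F Δ x| :=
      mul_le_mul_of_nonneg_left (le_abs_self _) hε.le
    have hexp : F 0 + (1 - ε) * Bdot F Δ x
        = F 0 + Bdot F Δ x - ε * Bdot F Δ x := by ring
    have hεC : ε * C = (L : ℝ) * (ε * ‖x‖) + ε * |Bdot F Δ x| := by rw [hC]; ring
    rw [hexp] at h1
    rw [hεC]
    linarith [h2.2, mul_le_mul_of_nonneg_left (neg_abs_le (Bdot F Δ x)) hε.le]
  -- contradiction
  have hlast : F x ≤ F 0 + Bdot F Δ x := by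
    by_contra hlt
    push_neg at hlt
    set δ := F x - (F 0 + Bdot F Δ x) with hδdef
    have hδ : 0 < δ := by simp only [hδdef]; linarith
    set ε := min (δ / (2 * (C + 1))) (1 / 2) with hεdef
    have hεpos : 0 < ε := lt_min (div_pos hδ (by linarith)) (by norm_num)
    have hε1 : ε < 1 := lt_of_le_of_lt (min_le_right _ _) (by norm_num)
    have h1 := hfinal ε hεpos hε1
    have h2 : ε * C < δ := by
      have hle : ε ≤ δ / (2 * (C + 1)) := min_le_left _ _
      have : ε * C ≤ (δ / (2 * (C + 1))) * C :=
        mul_le_mul_of_nonneg_right hle hC0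
      have hlt2 : (δ / (2 * (C + 1))) * C < δ := by
        rw [div_mul_eq_mul_div, div_lt_iff₀ (by linarith)]
        nlinarith
      exact lt_of_le_of_lt this hlt2
    rw [hδdef] at h2
    linarith
  linarith

end
end

section
/- Game call option with large penalty: here d = 1, F(x) = (x−K)^+ for a constant K > 0, and Δ > K. The function R(x) = x belongs to 𝒢 and is its minimal element: R(x) ≤ g(x) for every g ∈ 𝒢 and every x ≥ 0. -/
open Set
open scoped Classical

noncomputable section

/-- Membership in the class `𝒢` (one-dimensional case): `f : ℝ₊ → ℝ₊` is continuous,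
`F ≤ f ≤ F + Δ` on `ℝ₊`, and `f` is concave on every interval (convex subset)
`I ⊆ ℝ₊` on which `f < F + Δ`. -/
def memG1 (F : ℝ → ℝ) (Δ : ℝ) (f : ℝ → ℝ) : Prop :=
  ContinuousOn f (Ici (0 : ℝ)) ∧
  (∀ x ∈ Ici (0 : ℝ), 0 ≤ f x) ∧
  (∀ x ∈ Ici (0 : ℝ), F x ≤ f x ∧ f x ≤ F x + Δ) ∧
  (∀ I : Set ℝ, I ⊆ Ici (0 : ℝ) → Convex ℝ I →
    (∀ x ∈ I, f x < F x + Δ) → ConcaveOn ℝ I f)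

/-- For `F x = (x-K)⁺` and `Δ > K`, we always have `x < F x + Δ`. -/
lemma lt_F_add_delta (K Δ x : ℝ) (hΔK : K < Δ) : x < max (x - K) 0 + Δ := by
  have h : x - K ≤ max (x - K) 0 := le_max_left _ _
  linarith

/-- Key minimality lemma: any `g ∈ 𝒢` dominates the identity on `ℝ₊`. -/
lemma min_aux (K Δ : ℝ) (hK : 0 < K) (hΔK : K < Δ) (g : ℝ → ℝ)
    (hg : memG1 (fun x => max (x - K) 0) Δ g) :
    ∀ x ∈ Ici (0 : ℝ), x ≤ g x := by
  obtain ⟨hcont, hnn, hbd, hconc⟩ := hg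
  intro x₀ hx₀
  have hx₀0 : (0:ℝ) ≤ x₀ := hx₀
  by_contra hlt
  push_neg at hlt
  -- `S` : points of `[0, x₀]` where `g ≥ id`; `a` its greatest element.
  set S : Set ℝ := Icc 0 x₀ ∩ (fun x => g x - x) ⁻¹' Ici 0 with hS
  have hScl : IsClosed S :=
    ContinuousOn.preimage_isClosed_of_isClosed
      ((hcont.mono Icc_subset_Ici_self).sub continuousOn_id) isClosed_Icc isClosed_Ici
  have h0S : (0 : ℝ) ∈ S :=
    ⟨⟨le_refl _, hx₀0⟩, by simp only [mem_preimage, mem_Ici]; linarith [hnn 0 (mem_Ici.mpr le_rfl)]⟩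
  have hSbdd : BddAbove S := ⟨x₀, fun y hy => hy.1.2⟩
  obtain ⟨a, haS, haub⟩ : ∃ a, a ∈ S ∧ ∀ y ∈ S, y ≤ a :=
    ⟨sSup S, hScl.csSup_mem ⟨0, h0S⟩ hSbdd, fun y hy => le_csSup hSbdd hy⟩
  have ha0 : 0 ≤ a := haS.1.1
  have hax₀ : a ≤ x₀ := haS.1.2
  have hga : a ≤ g a := by
    have := haS.2; simp only [mem_preimage, mem_Ici] at this; linarith
  have halt : a < x₀ := by
    rcases lt_or_eq_of_le hax₀ with h | h
    · exact h
    · exfalso; rw [h] at hga; linarith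
  -- On `(a, x₀]`, `g < id`.
  have hmid : ∀ x, a < x → x ≤ x₀ → g x < x := by
    intro x hax hxx₀
    by_contra h
    push_neg at h
    have hxS : x ∈ S := ⟨⟨le_trans ha0 hax.le, hxx₀⟩,
      by simp only [mem_preimage, mem_Ici]; linarith⟩
    exact absurd (haub x hxS) (not_le.mpr hax)
  -- `g a = a` by continuity from the right.
  have hgale : g a ≤ a := by
    have hsub : Ioi a ⊆ Ici (0:ℝ) := fun x hx => le_trans ha0 (le_of_lt hx)
    have hten : Filter.Tendsto g (nhdsWithin a (Ioi a)) (nhds (g a)) :=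
      ((hcont a ha0).mono hsub).tendsto
    have hid : Filter.Tendsto (fun x : ℝ => x) (nhdsWithin a (Ioi a)) (nhds a) :=
      Filter.tendsto_id.mono_left nhdsWithin_le_nhds
    have hev : ∀ᶠ x in nhdsWithin a (Ioi a), g x ≤ x := by
      filter_upwards [Ioc_mem_nhdsGT_of_mem ⟨le_refl a, halt⟩] with x hx
      exact (hmid x hx.1 hx.2).le
    exact le_of_tendsto_of_tendsto hten hid hev
  have hga' : g a = a := le_antisymm hgale hga
  -- Two cases: either `g ≥ id` somewhere to the right of `x₀`, or nowhere.
  by_cases hex : ∃ c, x₀ ≤ c ∧ c ≤ g c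
  · -- bounded case: take the least such point `b > x₀`.
    obtain ⟨c, hc1, hc2⟩ := hex
    set T : Set ℝ := Icc x₀ c ∩ (fun x => g x - x) ⁻¹' Ici 0 with hT
    have hTcl : IsClosed T :=
      ContinuousOn.preimage_isClosed_of_isClosed
        ((hcont.mono (Icc_subset_Ici_self.trans (Ici_subset_Ici.mpr hx₀0))).sub
          continuousOn_id) isClosed_Icc isClosed_Ici
    have hcT : c ∈ T := ⟨⟨hc1, le_refl _⟩, by simp only [mem_preimage, mem_Ici]; linarith⟩
    have hTbdd : BddBelow T := ⟨x₀, fun y hy => hy.1.1⟩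
    obtain ⟨b, hbT, hblb⟩ : ∃ b, b ∈ T ∧ ∀ y ∈ T, b ≤ y :=
      ⟨sInf T, hTcl.csInf_mem ⟨c, hcT⟩ hTbdd, fun y hy => csInf_le hTbdd hy⟩
    have hbx₀ : x₀ ≤ b := hbT.1.1
    have hgb : b ≤ g b := by
      have := hbT.2; simp only [mem_preimage, mem_Ici] at this; linarith
    have hx₀b : x₀ < b := by
      rcases lt_or_eq_of_le hbx₀ with h | h
      · exact h
      · exfalso; rw [← h] at hgb; linarith
    have hb0 : 0 ≤ b := le_trans hx₀0 hbx₀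
    have hmid2 : ∀ x, x₀ ≤ x → x < b → g x < x := by
      intro x hx1 hx2
      by_contra h
      push_neg at h
      have hxT : x ∈ T := ⟨⟨hx1, hx2.le.trans hbT.1.2⟩,
        by simp only [mem_preimage, mem_Ici]; linarith⟩
      exact absurd (hblb x hxT) (not_le.mpr hx2)
    -- `g b = b` by continuity from the left.
    have hgble : g b ≤ b := by
      have hmem : Ico x₀ b ∈ nhdsWithin b (Iio b) :=
        Ico_mem_nhdsLT_of_mem ⟨hx₀b, le_refl b⟩
      have hten : Filter.Tendsto g (nhdsWithin b (Iio b)) (nhds (g b)) := by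
        refine ((hcont b hb0).mono_of_mem_nhdsWithin ?_).tendsto
        exact Filter.mem_of_superset hmem (fun x hx => le_trans hx₀0 hx.1)
      have hid : Filter.Tendsto (fun x : ℝ => x) (nhdsWithin b (Iio b)) (nhds b) :=
        Filter.tendsto_id.mono_left nhdsWithin_le_nhds
      have hev : ∀ᶠ x in nhdsWithin b (Iio b), g x ≤ x := by
        filter_upwards [hmem] with x hx
        exact (hmid2 x hx.1 hx.2).le
      exact le_of_tendsto_of_tendsto hten hid hev
    have hgb' : g b = b := le_antisymm hgble hgb
    -- `g < F + Δ` on `[a, b]`, so `g` is concave there.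
    have hIcc : ∀ x ∈ Icc a b, g x < max (x - K) 0 + Δ := by
      intro x hx
      rcases eq_or_lt_of_le hx.1 with h | hax
      · rw [← h, hga']; exact lt_F_add_delta K Δ a hΔK
      rcases eq_or_lt_of_le hx.2 with h | hxb
      · rw [h, hgb']; exact lt_F_add_delta K Δ b hΔK
      rcases le_or_gt x x₀ with h | h
      · exact (hmid x hax h).trans (lt_F_add_delta K Δ x hΔK)
      · exact (hmid2 x h.le hxb).trans (lt_F_add_delta K Δ x hΔK)
    have hcc : ConcaveOn ℝ (Icc a b) g :=
      hconc (Icc a b) (fun x hx => le_trans ha0 hx.1) (convex_Icc a b) hIcc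
    -- concavity at `x₀` between `a` and `b` yields a contradiction.
    have hba : 0 < b - a := by linarith
    set t := (b - x₀) / (b - a) with ht
    set s := (x₀ - a) / (b - a) with hs
    have ht0 : 0 ≤ t := div_nonneg (by linarith) hba.le
    have hs0 : 0 ≤ s := div_nonneg (by linarith) hba.le
    have hts : t + s = 1 := by rw [ht, hs, ← add_div, div_eq_one_iff_eq hba.ne']; ring
    have hcomb : t • a + s • b = x₀ := by
      simp only [smul_eq_mul, ht, hs]; field_simp; ring
    have key := hcc.2 (mem_Icc.mpr ⟨le_refl a, by linarith⟩)
      (mem_Icc.mpr ⟨by linarith, le_refl b⟩) ht0 hs0 hts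
    rw [hcomb] at key
    simp only [smul_eq_mul, hga', hgb'] at key
    have : t * a + s * b = x₀ := by simpa [smul_eq_mul] using hcomb
    linarith
  · -- unbounded case: `g < id` on all of `(a, ∞)`, concave on `[a, ∞)`.
    push_neg at hex
    have hI : ∀ x ∈ Ici a, g x < max (x - K) 0 + Δ := by
      intro x hx
      rcases eq_or_lt_of_le (mem_Ici.mp hx) with h | hax
      · rw [← h, hga']; exact lt_F_add_delta K Δ a hΔK
      · rcases le_or_gt x x₀ with h | h
        · exact (hmid x hax h).trans (lt_F_add_delta K Δ x hΔK)
        · exact (hex x h.le).trans (lt_F_add_delta K Δ x hΔK)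
    have hcc : ConcaveOn ℝ (Ici a) g :=
      hconc (Ici a) (fun x hx => le_trans ha0 hx) (convex_Ici a) hI
    set ε := x₀ - g x₀ with hε
    have hε0 : 0 < ε := by simp only [hε]; linarith
    set y := max (x₀ + 1) (a + 2 * K * (x₀ - a) / ε) with hy
    have hyx₀ : x₀ < y := lt_of_lt_of_le (by linarith) (le_max_left _ _)
    have hya : a < y := lt_trans halt hyx₀
    have hgy : y - K ≤ g y := le_trans (le_max_left _ _) (hbd y (le_trans ha0 hya.le)).1
    set t := (y - x₀) / (y - a) with ht
    set s := (x₀ - a) / (y - a) with hs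
    have hya' : 0 < y - a := by linarith
    have ht0 : 0 ≤ t := div_nonneg (by linarith) hya'.le
    have hs0 : 0 ≤ s := div_nonneg (by linarith) hya'.le
    have hts : t + s = 1 := by rw [ht, hs, ← add_div, div_eq_one_iff_eq hya'.ne']; ring
    have hcomb : t • a + s • y = x₀ := by
      simp only [smul_eq_mul, ht, hs]; field_simp; ring
    have key := hcc.2 (mem_Ici.mpr (le_refl a)) (mem_Ici.mpr hya.le) ht0 hs0 hts
    rw [hcomb] at key
    have key2 : t * a + s * (y - K) ≤ g x₀ := by
      have h1 : s * (y - K) ≤ s * g y := mul_le_mul_of_nonneg_left hgy hs0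
      simp only [smul_eq_mul, hga'] at key
      linarith
    have hexp : t * a + s * (y - K) = x₀ - K * (x₀ - a) / (y - a) := by
      simp only [ht, hs]; field_simp; ring
    have hybig : a + 2 * K * (x₀ - a) / ε ≤ y := le_max_right _ _
    have hfrac : K * (x₀ - a) / (y - a) ≤ ε / 2 := by
      rw [div_le_div_iff₀ hya' (by norm_num : (0:ℝ) < 2)]
      have h1 : 2 * K * (x₀ - a) / ε ≤ y - a := by linarith
      have h2 : 2 * K * (x₀ - a) ≤ (y - a) * ε := by
        rw [div_le_iff₀ hε0] at h1; linarith
      linarith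
    have hfin : x₀ - ε / 2 ≤ g x₀ := by rw [hexp] at key2; linarith
    simp only [hε] at hfin
    linarith

/-- Game call option with large penalty (`Δ > K`): with `F(x) = (x - K)⁺`, the
function `R(x) = x` belongs to `𝒢` and is its minimal element. -/
theorem call_large_penalty (K Δ : ℝ) (hK : 0 < K) (hΔK : K < Δ) :
    memG1 (fun x => max (x - K) 0) Δ (fun x => x) ∧
    ∀ g : ℝ → ℝ, memG1 (fun x => max (x - K) 0) Δ g →
      ∀ x ∈ Ici (0 : ℝ), x ≤ g x := by
  constructor
  · refine ⟨continuousOn_id, fun x hx => hx, fun x hx => ⟨?_, ?_⟩, fun I hI hconv _ => ?_⟩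
    · exact max_le (by linarith) hx
    · have : x - K ≤ max (x - K) 0 := le_max_left _ _
      linarith
    · exact ⟨hconv, by intro x hx y hy t s ht hs hts; simp [smul_eq_mul]⟩
  · exact fun g hg => min_aux K Δ hK hΔK g hg

end
end

section
/- Game put option with small penalty: here d = 1, F(x) = (K−x)^+ for a constant K > 0, and 0 < Δ ≤ K. The function R(x) = K − ((K−Δ)/K)·x for 0 ≤ x < K and R(x) = Δ for x ≥ K belongs to 𝒢 and is its minimal element: R(x) ≤ g(x) for every g ∈ 𝒢 and every x ≥ 0. -/
open Set
open scoped Classical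
open Filter Topology

noncomputable section

lemma concaveOn_Icc_of_Ioo {g : ℝ → ℝ} {a b : ℝ} (hab : a < b)
    (hc : ContinuousOn g (Icc a b)) (hg : ConcaveOn ℝ (Ioo a b) g) :
    ConcaveOn ℝ (Icc a b) g := by
  refine ⟨convex_Icc a b, ?_⟩
  intro x hx y hy s t hs ht hst
  set m := (a + b) / 2 with hm
  have key : ∀ ε ∈ Ioo (0:ℝ) 1, ∀ z ∈ Icc a b, m + (1 - ε) * (z - m) ∈ Ioo a b := by
    intro ε hε z hz
    constructor
    · nlinarith [mul_nonneg (by linarith [hε.2] : (0:ℝ) ≤ 1 - ε) (by linarith [hz.1] : (0:ℝ) ≤ z - a), hε.1, hε.2, hz.1, hz.2]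
    · nlinarith [mul_nonneg (by linarith [hε.2] : (0:ℝ) ≤ 1 - ε) (by linarith [hz.2] : (0:ℝ) ≤ b - z), hε.1, hε.2, hz.1, hz.2]
  have hmem : ∀ᶠ ε : ℝ in 𝓝[>] 0, ε ∈ Ioo (0:ℝ) 1 :=
    Ioo_mem_nhdsGT_of_mem (by constructor <;> norm_num)
  have hlim : ∀ z ∈ Icc a b,
      Tendsto (fun ε : ℝ => g (m + (1 - ε) * (z - m))) (𝓝[>] 0) (𝓝 (g z)) := by
    intro z hz
    have t1 : Tendsto (fun ε : ℝ => m + (1 - ε) * (z - m)) (𝓝[>] 0) (𝓝 z) := by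
      have hcont : Continuous fun ε : ℝ => m + (1 - ε) * (z - m) := by continuity
      simpa using (hcont.tendsto 0).mono_left nhdsWithin_le_nhds
    exact (hc z hz).tendsto.comp (tendsto_nhdsWithin_iff.2
      ⟨t1, hmem.mono fun ε hε => Ioo_subset_Icc_self (key ε hε z hz)⟩)
  have hxy : s • x + t • y ∈ Icc a b := (convex_Icc a b) hx hy hs ht hst
  refine le_of_tendsto_of_tendsto
    (((hlim x hx).const_mul s).add ((hlim y hy).const_mul t)) (hlim _ hxy) ?_
  filter_upwards [hmem] with ε hε
  have h := hg.2 (key ε hε x hx) (key ε hε y hy) hs ht hst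
  have harg : s • (m + (1 - ε) * (x - m)) + t • (m + (1 - ε) * (y - m))
      = m + (1 - ε) * ((s • x + t • y) - m) := by
    have htt : t = 1 - s := by linarith
    subst htt; simp only [smul_eq_mul]; ring
  rw [harg] at h
  simpa [smul_eq_mul] using h


lemma chord_bound {g : ℝ → ℝ} {a b x : ℝ} (hcv : ConcaveOn ℝ (Icc a b) g)
    (hab : a < b) (hx : x ∈ Icc a b) :
    (b - x) / (b - a) * g a + (x - a) / (b - a) * g b ≤ g x := by
  have hba : (0:ℝ) < b - a := by linarith
  have hs : 0 ≤ (b - x) / (b - a) := div_nonneg (by linarith [hx.2]) hba.le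
  have ht : 0 ≤ (x - a) / (b - a) := div_nonneg (by linarith [hx.1]) hba.le
  have hst : (b - x) / (b - a) + (x - a) / (b - a) = 1 := by field_simp; ring
  have h := hcv.2 (left_mem_Icc.2 hab.le) (right_mem_Icc.2 hab.le) hs ht hst
  have harg : ((b - x) / (b - a)) • a + ((x - a) / (b - a)) • b = x := by
    simp only [smul_eq_mul]; field_simp; ring
  rw [harg] at h
  simpa [smul_eq_mul] using h

/-- Closedness of the contact set restricted to a closed set. -/
lemma contact_closed (K Δ : ℝ) {g : ℝ → ℝ} (hcont : ContinuousOn g (Ici (0:ℝ)))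
    {s : Set ℝ} (hs : IsClosed s) (hsub : s ⊆ Ici (0:ℝ)) :
    IsClosed {x | x ∈ s ∧ max (K - x) 0 + Δ ≤ g x} := by
  have hf : ContinuousOn (fun x => g x - (max (K - x) 0 + Δ)) s :=
    (hcont.mono hsub).sub (by fun_prop)
  have : {x | x ∈ s ∧ max (K - x) 0 + Δ ≤ g x}
      = s ∩ (fun x => g x - (max (K - x) 0 + Δ)) ⁻¹' Ici 0 := by
    ext x; simp [sub_nonneg]
  rw [this]
  exact hf.preimage_isClosed_of_isClosed hs isClosed_Ici

lemma step1 (K Δ : ℝ) (hK : 0 < K) (hΔ : 0 < Δ) (hΔK : Δ ≤ K)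
    {g : ℝ → ℝ} (hg : memG1 (fun x => max (K - x) 0) Δ g) :
    ∀ x ∈ Ici (0:ℝ), Δ ≤ g x := by
  obtain ⟨hcont, hpos, hbd, hconc⟩ := hg
  intro x₀ hx₀0
  by_contra hlt
  push_neg at hlt
  have hx₀ : (0:ℝ) ≤ x₀ := hx₀0
  -- the left contact point
  set A := {x | x ∈ Icc 0 x₀ ∧ max (K - x) 0 + Δ ≤ g x} ∪ {0} with hA
  have hAclosed : IsClosed A :=
    (contact_closed K Δ hcont isClosed_Icc (fun x hx => hx.1)).union isClosed_singleton
  have hAne : A.Nonempty := ⟨0, Or.inr rfl⟩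
  have hAsub : A ⊆ Icc 0 x₀ := by
    rintro x (hx | hx)
    · exact hx.1
    · simp only [mem_singleton_iff] at hx; subst hx; exact ⟨le_refl _, hx₀⟩
  set a := sSup A with ha
  have haA : a ∈ A := hAclosed.csSup_mem hAne ((isCompact_Icc.bddAbove).mono hAsub)
  have haIcc : a ∈ Icc 0 x₀ := hAsub haA
  have hga : Δ ≤ g a := by
    rcases haA with h | h
    · calc Δ ≤ max (K - a) 0 + Δ := le_add_of_nonneg_left (le_max_right _ _)
        _ ≤ g a := h.2
    · simp only [mem_singleton_iff] at h; rw [h]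
      calc Δ ≤ K := hΔK
        _ ≤ max (K - 0) 0 := by simp [hK.le]
        _ ≤ g 0 := (hbd 0 (mem_Ici.2 (le_refl 0))).1
  have hax₀ : a < x₀ := lt_of_le_of_ne haIcc.2 (fun h => absurd (h ▸ hga) (by linarith))
  -- on (a, x₀] the function is strictly below F + Δ
  have hopen_left : ∀ x, a < x → x ≤ x₀ → g x < max (K - x) 0 + Δ := by
    intro x hax hxx₀
    by_contra hge
    push_neg at hge
    have : x ∈ A := Or.inl ⟨⟨le_trans haIcc.1 hax.le, hxx₀⟩, hge⟩
    exact absurd (le_csSup ((isCompact_Icc.bddAbove).mono hAsub) this) (not_le.2 hax)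
  by_cases hB : ∃ x, x₀ < x ∧ max (K - x) 0 + Δ ≤ g x
  · -- bounded component: right contact point
    set B := {x | x ∈ Ici x₀ ∧ max (K - x) 0 + Δ ≤ g x} with hBdef
    have hBclosed : IsClosed B := contact_closed K Δ hcont isClosed_Ici
      (fun x hx => le_trans hx₀ hx)
    have hBne : B.Nonempty := by
      obtain ⟨x, hx1, hx2⟩ := hB; exact ⟨x, hx1.le, hx2⟩
    have hBbdd : BddBelow B := ⟨x₀, fun x hx => hx.1⟩
    set b := sInf B with hb
    have hbB : b ∈ B := hBclosed.csInf_mem hBne hBbdd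
    have hgb : Δ ≤ g b := le_trans (le_add_of_nonneg_left (le_max_right _ _)) hbB.2
    have hx₀b : x₀ < b := by
      rcases lt_or_eq_of_le (mem_Ici.1 hbB.1 : x₀ ≤ b) with h | h
      · exact h
      · exfalso; rw [← h] at hbB
        have := hbB.2
        have : Δ ≤ g x₀ := le_trans (le_add_of_nonneg_left (le_max_right _ _)) this
        linarith
    have hopen_right : ∀ x, x₀ < x → x < b → g x < max (K - x) 0 + Δ := by
      intro x h1 h2
      by_contra hge
      push_neg at hge
      have := csInf_le hBbdd (⟨h1.le, hge⟩ : x ∈ B)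
      rw [← hb] at this
      linarith
    have hconcab : ConcaveOn ℝ (Icc a b) g := by
      apply concaveOn_Icc_of_Ioo (lt_trans hax₀ hx₀b)
        (hcont.mono (fun x hx => le_trans haIcc.1 hx.1))
      apply hconc _ (fun x hx => le_trans haIcc.1 hx.1.le) (convex_Ioo a b)
      intro x hx
      rcases le_or_gt x x₀ with h | h
      · exact hopen_left x hx.1 h
      · exact hopen_right x h hx.2
    have hch := chord_bound hconcab (lt_trans hax₀ hx₀b) ⟨hax₀.le, hx₀b.le⟩
    have h1 : (0:ℝ) ≤ (b - x₀) / (b - a) := div_nonneg (by linarith) (by linarith)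
    have h2 : (0:ℝ) ≤ (x₀ - a) / (b - a) := div_nonneg (by linarith) (by linarith)
    have h3 : (b - x₀) / (b - a) + (x₀ - a) / (b - a) = 1 := by
      have hba : b - a ≠ 0 := ne_of_gt (by linarith)
      field_simp
      ring
    nlinarith [mul_le_mul_of_nonneg_left hga h1, mul_le_mul_of_nonneg_left hgb h2]
  · -- unbounded component: g concave on (a, ∞), contradiction with g ≥ 0
    push_neg at hB
    have hconcIoi : ConcaveOn ℝ (Ioi a) g := by
      apply hconc _ (fun x hx => le_trans haIcc.1 (le_of_lt hx)) (convex_Ioi a)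
      intro x hx
      rcases le_or_gt x x₀ with h | h
      · exact hopen_left x hx h
      · exact lt_of_not_ge fun hge => absurd (hB x h) (not_lt.2 hge)
    -- find u ∈ (a, x₀) with g x₀ < g u
    have hev1 : ∀ᶠ y in 𝓝[>] a, y ∈ Ioo a x₀ :=
      Ioo_mem_nhdsGT_of_mem ⟨le_refl a, hax₀⟩
    have hev2 : ∀ᶠ y in 𝓝[>] a, g x₀ < g y := by
      have hca : Filter.Tendsto g (𝓝[Ici 0] a) (𝓝 (g a)) := (hcont a haIcc.1).tendsto
      have : ∀ᶠ z in 𝓝 (g a), g x₀ < z := eventually_gt_nhds (by linarith)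
      exact (hca.mono_left (nhdsWithin_mono a (fun y (hy : y ∈ Ioi a) =>
        le_trans haIcc.1 hy.le))).eventually this
    obtain ⟨u, hu1, hu2⟩ := (hev1.and hev2).exists
    have hgu : 0 < g u := lt_of_le_of_lt (hpos x₀ hx₀0) hu2
    have hgx₀0 : 0 ≤ g x₀ := hpos x₀ hx₀0
    set t₀ := (g x₀ / g u + 1) / 2 with ht₀
    have hr1 : g x₀ / g u < 1 := (div_lt_one hgu).2 hu2
    have hr0 : 0 ≤ g x₀ / g u := div_nonneg hgx₀0 hgu.le
    have ht₀1 : t₀ < 1 := by rw [ht₀]; linarith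
    have ht₀0 : 0 < t₀ := by rw [ht₀]; linarith
    set w := (x₀ - t₀ * u) / (1 - t₀) with hw
    have h1t₀ : (0:ℝ) < 1 - t₀ := by linarith
    have hwx₀ : x₀ < w := by
      rw [hw, lt_div_iff₀ h1t₀]
      nlinarith [hu1.2]
    have hcomb : t₀ • u + (1 - t₀) • w = x₀ := by
      simp only [smul_eq_mul, hw]
      field_simp
      ring
    have haw : a < w := lt_trans hax₀ hwx₀
    have hc := hconcIoi.2 (mem_Ioi.2 hu1.1) (mem_Ioi.2 haw) ht₀0.le
      (by linarith : (0:ℝ) ≤ 1 - t₀) (by ring)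
    rw [hcomb] at hc
    simp only [smul_eq_mul] at hc
    have hgw : 0 ≤ g w := hpos w (le_trans hx₀ hwx₀.le)
    have hkey : g x₀ < t₀ * g u := by
      have : g x₀ / g u < t₀ := by rw [ht₀]; linarith
      calc g x₀ = g x₀ / g u * g u := by field_simp
        _ < t₀ * g u := by exact mul_lt_mul_of_pos_right this hgu
    nlinarith [mul_nonneg h1t₀.le hgw]


lemma step2 (K Δ : ℝ) (hK : 0 < K) (hΔ : 0 < Δ) (hΔK : Δ ≤ K)
    {g : ℝ → ℝ} (hg : memG1 (fun x => max (K - x) 0) Δ g) :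
    ∀ x ∈ Ici (0:ℝ), (if x < K then K - (K - Δ) / K * x else Δ) ≤ g x := by
  have hΔg := step1 K Δ hK hΔ hΔK hg
  obtain ⟨hcont, hpos, hbd, hconc⟩ := hg
  set c := (K - Δ) / K with hc
  have hcK : c * K = K - Δ := div_mul_cancel₀ _ (ne_of_gt hK)
  have hc0 : 0 ≤ c := div_nonneg (by linarith) hK.le
  have hc1 : c ≤ 1 := by rw [hc, div_le_one hK]; linarith
  have hRleFΔ : ∀ x, 0 ≤ x → K - c * x ≤ max (K - x) 0 + Δ := by
    intro x hx
    rcases le_or_gt x K with h | h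
    · rw [max_eq_left (by linarith)]
      nlinarith [mul_le_mul_of_nonneg_right h (sub_nonneg.2 hc1)]
    · rw [max_eq_right (by linarith)]
      nlinarith [mul_le_mul_of_nonneg_left h.le hc0]
  intro x₀ hx₀0
  have hx₀ : (0:ℝ) ≤ x₀ := hx₀0
  by_cases hx₀K : x₀ < K
  swap
  · rw [if_neg hx₀K]; exact hΔg x₀ hx₀0
  rw [if_pos hx₀K]
  by_contra hlt
  push_neg at hlt
  have hgx₀lt : g x₀ < max (K - x₀) 0 + Δ := lt_of_lt_of_le hlt (hRleFΔ x₀ hx₀)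
  -- left contact point
  set A := {x | x ∈ Icc 0 x₀ ∧ max (K - x) 0 + Δ ≤ g x} ∪ {0} with hA
  have hAclosed : IsClosed A :=
    (contact_closed K Δ hcont isClosed_Icc (fun x hx => hx.1)).union isClosed_singleton
  have hAne : A.Nonempty := ⟨0, Or.inr rfl⟩
  have hAsub : A ⊆ Icc 0 x₀ := by
    rintro x (hx | hx)
    · exact hx.1
    · simp only [mem_singleton_iff] at hx; subst hx; exact ⟨le_refl _, hx₀⟩
  set a := sSup A with ha
  have haA : a ∈ A := hAclosed.csSup_mem hAne ((isCompact_Icc.bddAbove).mono hAsub)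
  have haIcc : a ∈ Icc 0 x₀ := hAsub haA
  have hga : K - c * a ≤ g a := by
    rcases haA with h | h
    · exact le_trans (hRleFΔ a haIcc.1) h.2
    · simp only [mem_singleton_iff] at h; rw [h]
      have : K ≤ max (K - 0) 0 := by simp [hK.le]
      simpa using le_trans this (hbd 0 (mem_Ici.2 (le_refl 0))).1
  have hax₀ : a < x₀ := by
    rcases lt_or_eq_of_le haIcc.2 with h | h
    · exact h
    · exfalso
      have h1 : K - c * x₀ ≤ g x₀ := by rw [← h]; exact h ▸ hga
      linarith
  have hopen_left : ∀ x, a < x → x ≤ x₀ → g x < max (K - x) 0 + Δ := by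
    intro x hax hxx₀
    by_contra hge
    push_neg at hge
    have hxA : x ∈ A := Or.inl ⟨⟨le_trans haIcc.1 hax.le, hxx₀⟩, hge⟩
    exact absurd (le_csSup ((isCompact_Icc.bddAbove).mono hAsub) hxA) (not_le.2 hax)
  -- right contact point (exists because g K ≥ Δ = F K + Δ)
  set B := {x | x ∈ Icc x₀ K ∧ max (K - x) 0 + Δ ≤ g x} with hBdef
  have hBclosed : IsClosed B := contact_closed K Δ hcont isClosed_Icc
    (fun x hx => le_trans hx₀ hx.1)
  have hKB : K ∈ B := by
    refine ⟨⟨hx₀K.le, le_refl K⟩, ?_⟩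
    have : max (K - K) 0 = 0 := by simp
    rw [this, zero_add]
    exact hΔg K (mem_Ici.2 hK.le)
  have hBne : B.Nonempty := ⟨K, hKB⟩
  have hBbdd : BddBelow B := ⟨x₀, fun x hx => hx.1.1⟩
  set b := sInf B with hb
  have hbB : b ∈ B := hBclosed.csInf_mem hBne hBbdd
  have hbK : b ≤ K := hbB.1.2
  have hgb : K - c * b ≤ g b :=
    le_trans (hRleFΔ b (le_trans hx₀ hbB.1.1)) hbB.2
  have hx₀b : x₀ < b := by
    rcases lt_or_eq_of_le (hbB.1.1 : x₀ ≤ b) with h | h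
    · exact h
    · exfalso; rw [← h] at hbB; linarith [hbB.2]
  have hopen_right : ∀ x, x₀ < x → x < b → g x < max (K - x) 0 + Δ := by
    intro x h1 h2
    by_contra hge
    push_neg at hge
    have hxB : x ∈ B := ⟨⟨h1.le, le_trans h2.le hbK⟩, hge⟩
    have := csInf_le hBbdd hxB
    rw [← hb] at this
    linarith
  have hconcab : ConcaveOn ℝ (Icc a b) g := by
    apply concaveOn_Icc_of_Ioo (lt_trans hax₀ hx₀b)
      (hcont.mono (fun x hx => le_trans haIcc.1 hx.1))
    apply hconc _ (fun x hx => le_trans haIcc.1 hx.1.le) (convex_Ioo a b)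
    intro x hx
    rcases le_or_gt x x₀ with h | h
    · exact hopen_left x hx.1 h
    · exact hopen_right x h hx.2
  have hab : a < b := lt_trans hax₀ hx₀b
  have hch := chord_bound hconcab hab ⟨hax₀.le, hx₀b.le⟩
  set s := (b - x₀) / (b - a) with hs
  set t := (x₀ - a) / (b - a) with ht
  have hba : b - a ≠ 0 := ne_of_gt (by linarith)
  have h1 : (0:ℝ) ≤ s := div_nonneg (by linarith) (by linarith)
  have h2 : (0:ℝ) ≤ t := div_nonneg (by linarith) (by linarith)
  have h3 : s + t = 1 := by rw [hs, ht]; field_simp; ring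
  have h4 : s * a + t * b = x₀ := by rw [hs, ht]; field_simp; ring
  have h5 : s * (K - c * a) + t * (K - c * b) = K - c * x₀ := by
    linear_combination K * h3 - c * h4
  nlinarith [mul_le_mul_of_nonneg_left hga h1, mul_le_mul_of_nonneg_left hgb h2]

/-- Game put option with small penalty (`0 < Δ ≤ K`): with `F(x) = (K - x)⁺`, the
function `R(x) = K - ((K - Δ)/K)x` for `x < K`, `R(x) = Δ` for `x ≥ K` belongs to `𝒢`
and is its minimal element. -/
theorem put_small_penalty (K Δ : ℝ) (hK : 0 < K) (hΔ : 0 < Δ) (hΔK : Δ ≤ K) :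
    memG1 (fun x => max (K - x) 0) Δ
      (fun x => if x < K then K - (K - Δ) / K * x else Δ) ∧
    ∀ g : ℝ → ℝ, memG1 (fun x => max (K - x) 0) Δ g →
      ∀ x ∈ Ici (0 : ℝ), (if x < K then K - (K - Δ) / K * x else Δ) ≤ g x := by
  set c := (K - Δ) / K with hc
  have hcK : c * K = K - Δ := div_mul_cancel₀ _ (ne_of_gt hK)
  have hc0 : 0 ≤ c := div_nonneg (by linarith) hK.le
  have hc1 : c ≤ 1 := by rw [hc, div_le_one hK]; linarith
  have hReq : ∀ x : ℝ, (if x < K then K - c * x else Δ) = max (K - c * x) Δ := by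
    intro x
    rcases lt_or_ge x K with h | h
    · rw [if_pos h, max_eq_left]
      nlinarith [mul_le_mul_of_nonneg_left h.le hc0]
    · rw [if_neg (not_lt.2 h), max_eq_right]
      nlinarith [mul_le_mul_of_nonneg_left h hc0]
  have hRleFΔ : ∀ x, 0 ≤ x → K - c * x ≤ max (K - x) 0 + Δ := by
    intro x hx
    rcases le_or_gt x K with h | h
    · rw [max_eq_left (by linarith)]
      nlinarith [mul_le_mul_of_nonneg_right h (sub_nonneg.2 hc1)]
    · rw [max_eq_right (by linarith)]
      nlinarith [mul_le_mul_of_nonneg_left h.le hc0]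
  constructor
  · refine ⟨?_, ?_, ?_, ?_⟩
    · have heq : (fun x : ℝ => if x < K then K - c * x else Δ)
          = fun x => max (K - c * x) Δ := funext hReq
      rw [heq]
      exact ((continuous_const.sub (continuous_const.mul continuous_id)).max
        continuous_const).continuousOn
    · intro x _
      dsimp only
      rw [hReq x]
      exact le_trans hΔ.le (le_max_right _ _)
    · intro x hx
      dsimp only
      rw [hReq x]
      constructor
      · apply max_le
        · refine le_max_of_le_left ?_
          nlinarith [mul_le_mul_of_nonneg_right hc1 (mem_Ici.1 hx)]
        · exact le_max_of_le_right hΔ.le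
      · apply max_le (hRleFΔ x hx)
        exact le_add_of_nonneg_left (le_max_right _ _)
    · intro I hI hconv hltI
      have hIK : ∀ x ∈ I, x < K := by
        intro x hx
        by_contra h
        push_neg at h
        have h2 := hltI x hx
        dsimp only at h2
        rw [if_neg (not_lt.2 h), max_eq_right (by linarith)] at h2
        linarith
      refine ⟨hconv, ?_⟩
      intro x hx y hy s t hs ht hst
      have hmem := hconv hx hy hs ht hst
      have hzK := hIK _ hmem
      simp only [smul_eq_mul] at hzK ⊢
      rw [if_pos (hIK x hx), if_pos (hIK y hy), if_pos hzK]
      exact le_of_eq (by linear_combination K * hst)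
  · intro g hg x hx
    exact step2 K Δ hK hΔ hΔK hg x hx

end
end

section
/- Game put option with large penalty: here d = 1, F(x) = (K−x)^+ for a constant K > 0, and Δ > K. The constant function R ≡ K belongs to 𝒢 and is its minimal element: K ≤ g(x) for every g ∈ 𝒢 and every x ≥ 0. -/
open Set
open scoped Classical

noncomputable section

/-- If `g` is continuous within `Ici 0` at `c`, the open interval `Ioo u v` lies in
`Ici 0` and has `c` in its closure, and `y < g c`, then some point `s` of `Ioo u v`
has `y < g s`. -/
lemma exists_gt_near {g : ℝ → ℝ} {u v c y : ℝ}
    (hc : ContinuousWithinAt g (Set.Ici (0:ℝ)) c)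
    (hsub : Set.Ioo u v ⊆ Set.Ici (0:ℝ)) (hcl : c ∈ closure (Set.Ioo u v))
    (hy : y < g c) : ∃ s ∈ Set.Ioo u v, y < g s := by
  have h1 : g ⁻¹' Set.Ioi y ∈ nhdsWithin c (Set.Ici (0:ℝ)) :=
    hc.preimage_mem_nhdsWithin (Ioi_mem_nhds hy)
  have h2 : g ⁻¹' Set.Ioi y ∈ nhdsWithin c (Set.Ioo u v) := nhdsWithin_mono c hsub h1
  have hne : (nhdsWithin c (Set.Ioo u v)).NeBot := mem_closure_iff_nhdsWithin_neBot.mp hcl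
  obtain ⟨s, hs1, hs2⟩ := Filter.nonempty_of_mem (Filter.inter_mem self_mem_nhdsWithin h2)
  exact ⟨s, hs1, hs2⟩

/-- Game put option with large penalty (`Δ > K`): with `F(x) = (K - x)⁺`, the
constant function `R ≡ K` belongs to `𝒢` and is its minimal element:
`K ≤ g(x)` for every `g ∈ 𝒢` and every `x ≥ 0`. -/
theorem put_large_penalty (K Δ : ℝ) (hK : 0 < K) (hΔK : K < Δ) :
    memG1 (fun x => max (K - x) 0) Δ (fun _ => K) ∧
    ∀ g : ℝ → ℝ, memG1 (fun x => max (K - x) 0) Δ g →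
      ∀ x ∈ Ici (0 : ℝ), K ≤ g x := by
  constructor
  · refine ⟨continuousOn_const, fun x _ => hK.le, fun x hx => ?_, fun I _ hconv _ => ?_⟩
    · constructor
      · simp only [mem_Ici] at hx
        exact max_le (by linarith) hK.le
      · have := le_max_right (K - x) 0
        linarith
    · exact concaveOn_const K hconv
  · rintro g ⟨hcont, hnonneg, hbnd, hconc⟩ x₀ hx₀
    by_contra hlt
    push_neg at hlt
    -- g 0 ≥ K
    have hg0 : K ≤ g 0 := by
      have := (hbnd 0 self_mem_Ici).1
      simpa [max_eq_left hK.le] using this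
    have hx₀pos : 0 < x₀ := by
      rcases lt_or_eq_of_le (mem_Ici.mp hx₀) with h | h
      · exact h
      · exfalso; subst h; linarith
    -- the last point a ≤ x₀ where g ≥ K
    set A : Set ℝ := {x | x ∈ Icc 0 x₀ ∧ K ≤ g x} with hA
    have hAne : A.Nonempty := ⟨0, ⟨le_refl 0, hx₀pos.le⟩, hg0⟩
    have hAclosed : IsClosed A := by
      have : A = Icc 0 x₀ ∩ g ⁻¹' (Ici K) := by ext y; simp [hA, and_assoc]
      rw [this]
      exact (hcont.mono (Icc_subset_Ici_self)).preimage_isClosed_of_isClosed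
        isClosed_Icc isClosed_Ici
    have hAcomp : IsCompact A :=
      IsCompact.of_isClosed_subset isCompact_Icc hAclosed (fun y hy => hy.1)
    set a := sSup A with ha
    have haA : a ∈ A := hAcomp.sSup_mem hAne
    have ha0 : 0 ≤ a := haA.1.1
    have hax₀ : a < x₀ := lt_of_le_of_ne haA.1.2 (by intro h; rw [h] at haA; linarith [haA.2])
    have hga : K ≤ g a := haA.2
    have hltK : ∀ x, a < x → x ≤ x₀ → g x < K := by
      intro x h1 h2
      by_contra h
      push_neg at h
      have : x ∈ A := ⟨⟨le_trans ha0 h1.le, h2⟩, h⟩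
      exact absurd (le_csSup hAcomp.bddAbove this) (not_le.mpr h1)
    -- find s ∈ (a, x₀) with g x₀ < g s
    obtain ⟨s, hsmem, hgs⟩ : ∃ s ∈ Ioo a x₀, g x₀ < g s := by
      refine exists_gt_near (hcont a ha0) ?_ ?_ (lt_of_lt_of_le hlt hga)
      · exact fun y hy => le_trans ha0 hy.1.le
      · rw [closure_Ioo (ne_of_lt hax₀)]; exact ⟨le_refl a, hax₀.le⟩
    have hs0 : 0 ≤ s := le_trans ha0 hsmem.1.le
    have hgx₀nn : 0 ≤ g x₀ := hnonneg x₀ hx₀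
    by_cases hcase : ∃ t, x₀ < t ∧ K ≤ g t
    · -- Case 2 : g returns above K at some t > x₀; take the first such point b
      obtain ⟨t, htx₀, hgt⟩ := hcase
      set B : Set ℝ := {x | x ∈ Icc x₀ t ∧ K ≤ g x} with hB
      have hBne : B.Nonempty := ⟨t, ⟨htx₀.le, le_refl t⟩, hgt⟩
      have hBclosed : IsClosed B := by
        have : B = Icc x₀ t ∩ g ⁻¹' (Ici K) := by ext y; simp [hB, and_assoc]
        rw [this]
        exact (hcont.mono (fun y hy => le_trans hx₀ hy.1)).preimage_isClosed_of_isClosed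
          isClosed_Icc isClosed_Ici
      have hBcomp : IsCompact B :=
        IsCompact.of_isClosed_subset isCompact_Icc hBclosed (fun y hy => hy.1)
      set b := sInf B with hb
      have hbB : b ∈ B := hBcomp.sInf_mem hBne
      have hx₀b : x₀ < b := lt_of_le_of_ne hbB.1.1 (by intro h; rw [← h] at hbB; linarith [hbB.2])
      have hgb : K ≤ g b := hbB.2
      have hltK' : ∀ x, x₀ ≤ x → x < b → g x < K := by
        intro x h1 h2
        by_contra h
        push_neg at h
        have hxt : x ≤ t := lt_of_lt_of_le h2 hbB.1.2 |>.le
        have : x ∈ B := ⟨⟨h1, hxt⟩, h⟩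
        exact absurd (csInf_le hBcomp.bddBelow this) (not_le.mpr h2)
      -- g < F + Δ on Ioo a b, so g is concave there
      have hconcI : ConcaveOn ℝ (Ioo a b) g := by
        refine hconc (Ioo a b) (fun y hy => le_trans ha0 hy.1.le) (convex_Ioo a b) ?_
        intro y hy
        have hyK : g y < K := by
          rcases le_or_gt y x₀ with h | h
          · exact hltK y hy.1 h
          · exact hltK' y h.le hy.2
        have : (0:ℝ) ≤ max (K - y) 0 := le_max_right _ _
        linarith
      -- find u ∈ (x₀, b) with g x₀ < g u
      have hb0 : 0 ≤ b := le_trans hx₀ hbB.1.1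
      obtain ⟨u, humem, hgu⟩ : ∃ u ∈ Ioo x₀ b, g x₀ < g u := by
        refine exists_gt_near (hcont b hb0) ?_ ?_ (lt_of_lt_of_le hlt hgb)
        · exact fun y hy => le_trans hx₀ hy.1.le
        · rw [closure_Ioo (ne_of_lt hx₀b)]; exact ⟨hx₀b.le, le_refl b⟩
      -- concavity contradiction at x₀ between s and u
      have hsu : s < u := lt_trans hsmem.2 humem.1
      set lam := (u - x₀) / (u - s) with hlam
      set mu := (x₀ - s) / (u - s) with hmu
      have husgt : 0 < u - s := by linarith [hsmem.2, humem.1]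
      have hlampos : 0 < lam := div_pos (by linarith [humem.1]) husgt
      have hmupos : 0 < mu := div_pos (by linarith [hsmem.2]) husgt
      have hsum : lam + mu = 1 := by
        rw [hlam, hmu, ← add_div, div_eq_one_iff_eq (ne_of_gt husgt)]; ring
      have hcomb : lam • s + mu • u = x₀ := by
        simp only [smul_eq_mul, hlam, hmu]; field_simp; ring
      have hsI : s ∈ Ioo a b := ⟨hsmem.1, lt_trans hsmem.2 hx₀b⟩
      have huI : u ∈ Ioo a b := ⟨lt_trans hax₀ humem.1, humem.2⟩
      have := hconcI.2 hsI huI hlampos.le hmupos.le hsum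
      rw [hcomb] at this
      simp only [smul_eq_mul] at this
      nlinarith
    · -- Case 1 : g < K on all of (a, ∞); concavity on Ioi a forces g → -∞
      push_neg at hcase
      have hltK'' : ∀ x, a < x → g x < K := by
        intro x h1
        rcases le_or_gt x x₀ with h | h
        · exact hltK x h1 h
        · exact hcase x h
      have hconcI : ConcaveOn ℝ (Ioi a) g := by
        refine hconc (Ioi a) (fun y hy => le_trans ha0 (le_of_lt hy)) (convex_Ioi a) ?_
        intro y hy
        have : (0:ℝ) ≤ max (K - y) 0 := le_max_right _ _
        have := hltK'' y hy
        linarith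
      have hgspos : 0 < g s := lt_of_le_of_lt hgx₀nn hgs
      set t := s + (x₀ - s) * ((g s + 1) / (g s - g x₀)) with ht
      have hd : 0 < g s - g x₀ := by linarith
      have hratio : 1 < (g s + 1) / (g s - g x₀) := by
        rw [lt_div_iff₀ hd]; linarith
      have hxs : 0 < x₀ - s := by linarith [hsmem.2]
      have hx₀t : x₀ < t := by
        have : (x₀ - s) * 1 < (x₀ - s) * ((g s + 1) / (g s - g x₀)) :=
          (mul_lt_mul_iff_right₀ hxs).mpr hratio
        rw [ht]; linarith
      have hst : s < t := by linarith
      set lam := (t - x₀) / (t - s) with hlam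
      set mu := (x₀ - s) / (t - s) with hmu
      have hts : 0 < t - s := by linarith
      have hlampos : 0 < lam := div_pos (by linarith) hts
      have hmupos : 0 < mu := div_pos hxs hts
      have hsum : lam + mu = 1 := by
        rw [hlam, hmu, ← add_div, div_eq_one_iff_eq (ne_of_gt hts)]; ring
      have hcomb : lam • s + mu • t = x₀ := by
        simp only [smul_eq_mul, hlam, hmu]; field_simp; ring
      have hsI : s ∈ Ioi a := hsmem.1
      have htI : t ∈ Ioi a := lt_trans hax₀ hx₀t
      have hgtnn : 0 ≤ g t := hnonneg t (le_trans hs0 hst.le)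
      have hkey := hconcI.2 hsI htI hlampos.le hmupos.le hsum
      rw [hcomb] at hkey
      simp only [smul_eq_mul] at hkey
      -- lam * g s ≤ g x₀, but lam chosen so lam * g s > g x₀
      have h1 : lam * g s ≤ g x₀ := by nlinarith
      -- compute lam explicitly
      have htsval : t - s = (x₀ - s) * ((g s + 1) / (g s - g x₀)) := by rw [ht]; ring
      have htx₀val : t - x₀ = (x₀ - s) * ((g s + 1) / (g s - g x₀) - 1) := by
        rw [ht]; ring
      have hlamval : lam = 1 - (g s - g x₀) / (g s + 1) := by
        rw [hlam, htsval, htx₀val]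
        rw [div_eq_iff (by positivity)]
        field_simp
      rw [hlamval] at h1
      have hgs1 : 0 < g s + 1 := by linarith
      have : (1 - (g s - g x₀) / (g s + 1)) * g s = g s - (g s - g x₀) * g s / (g s + 1) := by
        field_simp
      rw [this] at h1
      have hfrac : (g s - g x₀) * g s / (g s + 1) < g s - g x₀ := by
        rw [div_lt_iff₀ hgs1]
        nlinarith
      linarith

end
end
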